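/- arXiv:1709.02117 — 6 statements merged into one kernel-verified Lean document; each statement's English description precedes it below -/
import Mathlib

section
/- Let F : I → (0,+∞] be a lower semicontinuous function on a nonempty open interval I ⊂ ℝ with F(s) < +∞ for almost every s. Then 1/F is locally bounded on I, and if G denotes an antiderivative of 1/F then φ := G⁻¹, defined on the interval J := G(I), is a surjective, strictly increasing, absolutely continuous function from J onto I satisfying φ'(t) = F(φ(t)) for almost every t ∈ J. -/
open Set MeasureTheory ENNReal
open NNReal

noncomputable def ggF (F : ℝ → ℝ≥0∞) : ℝ → ℝ := fun x => ((F x)⁻¹).toReal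

namespace Stmt1Aux

variable {I : Set ℝ} {F : ℝ → ℝ≥0∞} {G : ℝ → ℝ}

lemma gg_nonneg (F : ℝ → ℝ≥0∞) (x : ℝ) : 0 ≤ ggF F x := ENNReal.toReal_nonneg

lemma locBdd (hpos : ∀ x ∈ I, 0 < F x) (hlsc : LowerSemicontinuousOn F I) :
    ∀ x ∈ I, ∃ U ∈ nhds x, BddAbove (ggF F '' (U ∩ I)) := by
  intro x hx
  obtain ⟨c, hc0, hcF⟩ := exists_between (hpos x hx)
  have h := hlsc x hx c hcF
  rw [eventually_nhdsWithin_iff] at h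
  refine ⟨{y | y ∈ I → c < F y}, h, (c⁻¹).toReal, ?_⟩
  rintro r ⟨y, ⟨hyU, hyI⟩, rfl⟩
  exact ENNReal.toReal_mono (by simp [hc0.ne']) (ENNReal.inv_le_inv.2 (hyU hyI).le)

lemma bddCompact (hpos : ∀ x ∈ I, 0 < F x) (hlsc : LowerSemicontinuousOn F I)
    {K : Set ℝ} (hK : IsCompact K) (hKI : K ⊆ I) :
    ∃ C : ℝ≥0, ∀ u ∈ K, ggF F u ≤ C := by
  have h0 : ∀ x (hx : x ∈ K), ∃ U ∈ nhds x, BddAbove (ggF F '' (U ∩ I)) :=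
    fun x hx => locBdd hpos hlsc x (hKI hx)
  choose U hU hbdd using h0
  obtain ⟨t, ht⟩ := hK.elim_nhds_subcover' U hU
  have h2 : ∀ x (hx : x ∈ K), ∃ c : ℝ, ∀ u ∈ U x hx ∩ I, ggF F u ≤ c := by
    intro x hx
    obtain ⟨c, hc⟩ := hbdd x hx
    exact ⟨c, fun u hu => hc (mem_image_of_mem _ hu)⟩
  choose c hc using h2
  refine ⟨t.sup (fun x => (c x.1 x.2).toNNReal), fun u hu => ?_⟩
  have := ht hu
  rw [mem_iUnion₂] at this
  obtain ⟨x, hxt, hux⟩ := this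
  calc ggF F u ≤ c x.1 x.2 := hc x.1 x.2 u ⟨hux, hKI hu⟩
    _ ≤ ((c x.1 x.2).toNNReal : ℝ) := Real.le_coe_toNNReal _
    _ ≤ _ := by exact_mod_cast Finset.le_sup (f := fun x => (c x.1 x.2).toNNReal) hxt

lemma integrableOnIcc (hFmeas : Measurable F) {p q : ℝ} {C : ℝ≥0}
    (hC : ∀ u ∈ Icc p q, ggF F u ≤ C) :
    IntegrableOn (ggF F) (Icc p q) volume := by
  constructor
  · exact ((hFmeas.inv).ennreal_toReal).aestronglyMeasurable
  · apply HasFiniteIntegral.of_bounded (C := (C : ℝ))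
    refine (ae_restrict_iff' measurableSet_Icc).2 (Filter.Eventually.of_forall fun u hu => ?_)
    rw [Real.norm_of_nonneg (gg_nonneg F u)]
    exact hC u hu

lemma lipOn (hIconn : I.OrdConnected)
    (hG : ∀ a ∈ I, ∀ b ∈ I, G b - G a = ∫ x in a..b, ggF F x)
    {p q : ℝ} {C : ℝ≥0} (hpq : Icc p q ⊆ I) (hC : ∀ u ∈ Icc p q, ggF F u ≤ C) :
    LipschitzOnWith C G (Icc p q) := by
  rw [lipschitzOnWith_iff_dist_le_mul]
  intro a ha b hb
  have h1 : G a - G b = ∫ x in b..a, ggF F x := hG b (hpq hb) a (hpq ha)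
  have hsub : Set.uIoc b a ⊆ Icc p q :=
    Set.uIoc_subset_uIcc.trans (Set.ordConnected_Icc.uIcc_subset hb ha)
  have h2 : ‖∫ x in b..a, ggF F x‖ ≤ (C : ℝ) * |a - b| := by
    apply intervalIntegral.norm_integral_le_of_norm_le_const
    intro x hx
    rw [Real.norm_of_nonneg (gg_nonneg F x)]
    exact hC x (hsub hx)
  rw [Real.dist_eq, Real.dist_eq, h1]
  exact h2

lemma contG (hIopen : IsOpen I) (hIconn : I.OrdConnected)
    (hpos : ∀ x ∈ I, 0 < F x) (hlsc : LowerSemicontinuousOn F I)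
    (hG : ∀ a ∈ I, ∀ b ∈ I, G b - G a = ∫ x in a..b, ggF F x) :
    ContinuousOn G I := by
  intro x hx
  obtain ⟨ε, hε, hball⟩ := Metric.isOpen_iff.1 hIopen x hx
  have hIcc : Icc (x - ε/2) (x + ε/2) ⊆ I := by
    intro y hy
    apply hball
    rw [Metric.mem_ball, Real.dist_eq, abs_lt]
    constructor <;> [linarith [hy.1]; linarith [hy.2]]
  obtain ⟨C, hC⟩ := bddCompact hpos hlsc isCompact_Icc hIcc
  have hlip := lipOn hIconn hG hIcc hC
  have h1 : ContinuousWithinAt G (Icc (x - ε/2) (x + ε/2)) x :=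
    hlip.continuousOn x ⟨by linarith, by linarith⟩
  exact (h1.continuousAt (Icc_mem_nhds (by linarith) (by linarith))).continuousWithinAt

lemma smG (hIconn : I.OrdConnected)
    (hpos : ∀ x ∈ I, 0 < F x) (hlsc : LowerSemicontinuousOn F I)
    (hFmeas : Measurable F)
    (hfin : ∀ᵐ x ∂(volume : Measure ℝ), x ∈ I → F x ≠ ⊤)
    (hG : ∀ a ∈ I, ∀ b ∈ I, G b - G a = ∫ x in a..b, ggF F x) :
    StrictMonoOn G I := by
  intro x hx y hy hxy
  have hIcc : Icc x y ⊆ I := hIconn.out hx hy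
  obtain ⟨C, hC⟩ := bddCompact hpos hlsc isCompact_Icc hIcc
  have hint : IntegrableOn (ggF F) (Ioc x y) volume :=
    (integrableOnIcc hFmeas hC).mono_set Ioc_subset_Icc_self
  have key : 0 < ∫ t in Ioc x y, ggF F t := by
    rw [setIntegral_pos_iff_support_of_nonneg_ae
      (Filter.Eventually.of_forall fun t => gg_nonneg F t) hint]
    have h0 : volume {t : ℝ | t ∈ I → F t ≠ ⊤}ᶜ = 0 := by
      have := ae_iff.1 hfin
      simpa [compl_setOf] using this
    have hsub : Ioc x y ∩ {t : ℝ | t ∈ I → F t ≠ ⊤} ⊆ Function.support (ggF F) ∩ Ioc x y := by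
      rintro t ⟨ht, hFt⟩
      have htI : t ∈ I := hIcc (Ioc_subset_Icc_self ht)
      refine ⟨?_, ht⟩
      simp only [Function.mem_support, ggF]
      rw [ENNReal.toReal_ne_zero]
      exact ⟨ENNReal.inv_ne_zero.2 (hFt htI), ENNReal.inv_ne_top.2 (hpos t htI).ne'⟩
    calc (0 : ℝ≥0∞) < volume (Ioc x y) := by
          rw [Real.volume_Ioc]; exact ENNReal.ofReal_pos.2 (by linarith)
      _ = volume (Ioc x y ∩ {t : ℝ | t ∈ I → F t ≠ ⊤}) := (measure_inter_conull h0).symm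
      _ ≤ _ := measure_mono hsub
  have h2 := hG x hx y hy
  rw [intervalIntegral.integral_of_le hxy.le] at h2
  linarith

lemma lip_image_null {C : ℝ≥0} {s B : Set ℝ} (hlip : LipschitzOnWith C G s)
    (hB : B ⊆ s) (h0 : volume B = 0) : volume (G '' B) = 0 := by
  have h1 := (hlip.mono hB).hausdorffMeasure_image_le (zero_le_one (α := ℝ))
  rw [hausdorffMeasure_real] at h1
  refine le_antisymm (h1.trans ?_) zero_le
  simp [h0]


lemma exists_rat_Icc (hIopen : IsOpen I) (hIconn : I.OrdConnected) {u : ℝ} (hu : u ∈ I) :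
    ∃ p q : ℚ, Icc (p : ℝ) q ⊆ I ∧ u ∈ Ioo (p : ℝ) q := by
  obtain ⟨ε, hε, hball⟩ := Metric.isOpen_iff.1 hIopen u hu
  obtain ⟨p, hp1, hp2⟩ := exists_rat_btwn (show u - ε < u by linarith)
  obtain ⟨q, hq1, hq2⟩ := exists_rat_btwn (show u < u + ε by linarith)
  have hpI : (p : ℝ) ∈ I := hball (by rw [Metric.mem_ball, Real.dist_eq, abs_lt]; constructor <;> linarith)
  have hqI : (q : ℝ) ∈ I := hball (by rw [Metric.mem_ball, Real.dist_eq, abs_lt]; constructor <;> linarith)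
  exact ⟨p, q, hIconn.out hpI hqI, hp2, hq1⟩

lemma null_image (hIopen : IsOpen I) (hIconn : I.OrdConnected)
    (hpos : ∀ x ∈ I, 0 < F x) (hlsc : LowerSemicontinuousOn F I)
    (hG : ∀ a ∈ I, ∀ b ∈ I, G b - G a = ∫ x in a..b, ggF F x)
    {B : Set ℝ} (hB : B ⊆ I) (h0 : volume B = 0) : volume (G '' B) = 0 := by
  classical
  have hcov : G '' B ⊆ ⋃ pq : ℚ × ℚ,
      G '' (B ∩ (if Icc (pq.1 : ℝ) pq.2 ⊆ I then Icc (pq.1 : ℝ) pq.2 else ∅)) := by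
    rintro t ⟨u, hu, rfl⟩
    obtain ⟨p, q, hsub, hmem⟩ := exists_rat_Icc hIopen hIconn (hB hu)
    refine mem_iUnion.2 ⟨(p, q), ?_⟩
    rw [if_pos hsub]
    exact ⟨u, ⟨hu, Ioo_subset_Icc_self hmem⟩, rfl⟩
  apply measure_mono_null hcov
  apply measure_iUnion_null
  intro pq
  by_cases h : Icc (pq.1 : ℝ) pq.2 ⊆ I
  · rw [if_pos h]
    obtain ⟨C, hC⟩ := bddCompact hpos hlsc isCompact_Icc h
    exact lip_image_null (lipOn hIconn hG h hC) inter_subset_right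
      (measure_mono_null inter_subset_left h0)
  · rw [if_neg h]; simp

lemma ftc_ae (hIopen : IsOpen I) (hIconn : I.OrdConnected)
    (hpos : ∀ x ∈ I, 0 < F x) (hlsc : LowerSemicontinuousOn F I)
    (hFmeas : Measurable F)
    (hG : ∀ a ∈ I, ∀ b ∈ I, G b - G a = ∫ x in a..b, ggF F x) :
    ∀ᵐ u ∂(volume : Measure ℝ), u ∈ I → HasDerivAt G (ggF F u) u := by
  have key : ∀ p q : ℚ, Icc (p : ℝ) q ⊆ I →
      ∀ᵐ u ∂(volume : Measure ℝ), u ∈ Ioo (p : ℝ) q → HasDerivAt G (ggF F u) u := by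
    intro p q hpq
    rcases le_or_gt (q : ℝ) p with hqp | hpq'
    · have hemp : Ioo (p : ℝ) q = ∅ := Ioo_eq_empty (not_lt.2 hqp)
      filter_upwards with u hu
      rw [hemp] at hu
      exact absurd hu (notMem_empty u)
    obtain ⟨C, hC⟩ := bddCompact hpos hlsc isCompact_Icc hpq
    set f : ℝ → ℝ := (Icc (p : ℝ) q).indicator (ggF F) with hf
    have hfint : Integrable f volume :=
      (integrableOnIcc hFmeas hC).integrable_indicator measurableSet_Icc
    have hfloc : LocallyIntegrable f volume := hfint.locallyIntegrable
    have hle := IsUnifLocDoublingMeasure.ae_tendsto_average_norm_sub (volume : Measure ℝ) hfloc 1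
    filter_upwards [hle] with x hx hxI
    have hten : Filter.Tendsto (fun r => ⨍ y in Metric.closedBall x r, ‖f y - f x‖)
        (nhdsWithin 0 (Ioi 0)) (nhds 0) := by
      apply hx (fun _ => x) (fun r => r) Filter.tendsto_id
      filter_upwards [self_mem_nhdsWithin] with r (hr : r ∈ Ioi (0:ℝ))
      exact Metric.mem_closedBall_self (by simpa using hr.le)
    rw [hasDerivAt_iff_isLittleO, Asymptotics.isLittleO_iff]
    intro c hc
    have hav : ∀ᶠ r in nhdsWithin (0:ℝ) (Ioi 0),
        ⨍ y in Metric.closedBall x r, ‖f y - f x‖ < c / 2 :=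
      hten.eventually_lt_const (by linarith)
    obtain ⟨δ, hδ0, hδball⟩ := Metric.mem_nhdsWithin_iff.1 hav
    set δ0 := min δ (min (x - p) (q - x)) with hδ0def
    have hδ00 : 0 < δ0 := lt_min hδ0 (lt_min (by linarith [hxI.1]) (by linarith [hxI.2]))
    filter_upwards [Metric.ball_mem_nhds x hδ00] with y hy
    rcases eq_or_ne y x with rfl | hyx
    · simp
    have hdist : |y - x| < δ0 := by rwa [Metric.mem_ball, Real.dist_eq] at hy
    have hr0 : 0 < |y - x| := abs_pos.2 (sub_ne_zero.2 hyx)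
    have habs := abs_lt.1 hdist
    have hd1 : δ0 ≤ δ := min_le_left _ _
    have hd2 : δ0 ≤ x - p := (min_le_right _ _).trans (min_le_left _ _)
    have hd3 : δ0 ≤ q - x := (min_le_right _ _).trans (min_le_right _ _)
    have hxIcc : x ∈ Icc (p : ℝ) q := ⟨hxI.1.le, hxI.2.le⟩
    have hyIcc : y ∈ Icc (p : ℝ) q := ⟨by linarith [habs.1], by linarith [habs.2]⟩
    have hsub1 : Set.uIcc x y ⊆ Icc (p : ℝ) q :=
      Set.ordConnected_Icc.uIcc_subset hxIcc hyIcc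
    have hGxy : G y - G x = ∫ t in x..y, ggF F t := hG x (hpq hxIcc) y (hpq hyIcc)
    have hint : IntervalIntegrable (ggF F) volume x y :=
      ((integrableOnIcc hFmeas hC).mono_set (uIcc_subset_Icc hxIcc hyIcc)).intervalIntegrable
    have heq : G y - G x - (y - x) • ggF F x = ∫ t in x..y, (ggF F t - ggF F x) := by
      rw [intervalIntegral.integral_sub hint intervalIntegrable_const,
        intervalIntegral.integral_const, hGxy]
    have hnorm : ‖∫ t in x..y, (ggF F t - ggF F x)‖ ≤ ∫ t in Set.uIoc x y, ‖ggF F t - ggF F x‖ :=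
      intervalIntegral.norm_integral_le_integral_norm_uIoc
    have hcongr : ∫ t in Set.uIoc x y, ‖ggF F t - ggF F x‖ = ∫ t in Set.uIoc x y, ‖f t - f x‖ := by
      apply setIntegral_congr_fun measurableSet_uIoc
      intro t ht
      have htpq : t ∈ Icc (p : ℝ) q := hsub1 (uIoc_subset_uIcc ht)
      rw [hf]
      simp [indicator_of_mem htpq, indicator_of_mem hxIcc]
    have hballsub : Set.uIoc x y ⊆ Metric.closedBall x |y - x| := by
      intro t ht
      rw [Metric.mem_closedBall, Real.dist_eq]
      have h1 := le_abs_self (y - x)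
      have h2 := neg_abs_le (y - x)
      rw [Set.mem_uIoc] at ht
      rw [abs_le]
      rcases ht with ⟨ha, hb⟩ | ⟨ha, hb⟩ <;> constructor <;> linarith
    have hintb : IntegrableOn (fun t => ‖f t - f x‖) (Metric.closedBall x |y - x|) volume :=
      (hfint.integrableOn.sub
        (integrableOn_const measure_closedBall_lt_top.ne)).norm
    have hmono2 : ∫ t in Set.uIoc x y, ‖f t - f x‖ ≤
        ∫ t in Metric.closedBall x |y - x|, ‖f t - f x‖ := by
      apply setIntegral_mono_set hintb
      · exact Filter.Eventually.of_forall fun t => norm_nonneg _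
      · exact HasSubset.Subset.eventuallyLE hballsub
    have havg : ⨍ t in Metric.closedBall x |y - x|, ‖f t - f x‖ < c / 2 := by
      apply hδball
      constructor
      · rw [Metric.mem_ball, Real.dist_eq, sub_zero, abs_abs]
        exact lt_of_lt_of_le hdist hd1
      · exact hr0
    have hballint : ∫ t in Metric.closedBall x |y - x|, ‖f t - f x‖ =
        (2 * |y - x|) * ⨍ t in Metric.closedBall x |y - x|, ‖f t - f x‖ := by
      rw [setAverage_eq, measureReal_def, Real.volume_closedBall, ENNReal.toReal_ofReal (by positivity),
        smul_eq_mul]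
      field_simp
    calc ‖G y - G x - (y - x) • ggF F x‖
        ≤ ∫ t in Set.uIoc x y, ‖f t - f x‖ := by rw [heq, ← hcongr]; exact hnorm
      _ ≤ ∫ t in Metric.closedBall x |y - x|, ‖f t - f x‖ := hmono2
      _ = (2 * |y - x|) * ⨍ t in Metric.closedBall x |y - x|, ‖f t - f x‖ := hballint
      _ ≤ (2 * |y - x|) * (c / 2) := by
          apply mul_le_mul_of_nonneg_left havg.le (by positivity)
      _ = c * ‖y - x‖ := by rw [Real.norm_eq_abs]; ring
  have hall : ∀ᵐ u ∂(volume : Measure ℝ), ∀ p q : ℚ, Icc (p : ℝ) q ⊆ I →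
      (u ∈ Ioo (p : ℝ) q → HasDerivAt G (ggF F u) u) := by
    rw [ae_all_iff]
    intro p
    rw [ae_all_iff]
    intro q
    by_cases h : Icc (p : ℝ) q ⊆ I
    · filter_upwards [key p q h] with u hu _ using hu
    · filter_upwards with u hcon using absurd hcon h
  filter_upwards [hall] with u hu huI
  obtain ⟨p, q, hsub, hmem⟩ := exists_rat_Icc hIopen hIconn huI
  exact hu p q hsub hmem

end Stmt1Aux

open Set MeasureTheory ENNReal

open Stmt1Aux in
/-- Existence of an absolutely continuous solution of the autonomous ODE
`φ' = F ∘ φ` for a l.s.c. weight `F : I → (0,+∞]` which is finite a.e.,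
obtained as `φ = G⁻¹` where `G` is an antiderivative of `1/F`. -/
theorem stmt1 (I : Set ℝ) (hIopen : IsOpen I) (hIne : I.Nonempty)
    (hIconn : I.OrdConnected)
    (F : ℝ → ℝ≥0∞) (hFmeas : Measurable F)
    (hpos : ∀ x ∈ I, 0 < F x)
    (hlsc : LowerSemicontinuousOn F I)
    (hfin : ∀ᵐ x ∂(volume : Measure ℝ), x ∈ I → F x ≠ ⊤)
    (G : ℝ → ℝ)
    (hG : ∀ a ∈ I, ∀ b ∈ I, G b - G a = ∫ x in a..b, ((F x)⁻¹).toReal) :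
    -- `1/F` is locally bounded on `I`
    (∀ x ∈ I, ∃ U ∈ nhds x, BddAbove ((fun y => ((F y)⁻¹).toReal) '' (U ∩ I))) ∧
    -- `φ := G⁻¹ : J = G(I) → I` is surjective, strictly increasing,
    -- absolutely continuous, and solves `φ' = F ∘ φ` a.e. on `J`
    ∃ φ : ℝ → ℝ,
      (∀ x ∈ I, φ (G x) = x) ∧
      φ '' (G '' I) = I ∧
      StrictMonoOn φ (G '' I) ∧
      (∀ a ∈ G '' I, ∀ b ∈ G '' I, a ≤ b →
        φ b - φ a = ∫ t in a..b, (F (φ t)).toReal) ∧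
      (∀ᵐ t ∂(volume : Measure ℝ), t ∈ G '' I → HasDerivAt φ ((F (φ t)).toReal) t) := by
  have hG' : ∀ a ∈ I, ∀ b ∈ I, G b - G a = ∫ x in a..b, ggF F x := hG
  have hsm : StrictMonoOn G I := smG hIconn hpos hlsc hFmeas hfin hG'
  have hinj : InjOn G I := hsm.injOn
  have hcont : ContinuousOn G I := contG hIopen hIconn hpos hlsc hG'
  set φ := Function.invFunOn G I with hφdef
  have hleft : ∀ x ∈ I, φ (G x) = x := fun x hx => hinj.leftInvOn_invFunOn hx
  have himg : φ '' (G '' I) = I := by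
    have heq : EqOn (φ ∘ G) id I := fun x hx => hleft x hx
    rw [← image_comp, heq.image_eq, image_id]
  have hmono : StrictMonoOn φ (G '' I) := by
    rintro s ⟨x, hx, rfl⟩ t ⟨y, hy, rfl⟩ hst
    rw [hleft x hx, hleft y hy]
    by_contra h
    push_neg at h
    rcases h.lt_or_eq with h1 | h1
    · exact absurd (hsm hy hx h1) (not_lt.2 hst.le)
    · rw [h1] at hst; exact lt_irrefl _ hst
  -- a.e. good points for `G`
  have hder := ftc_ae hIopen hIconn hpos hlsc hFmeas hG'
  have hbadnull : volume {u : ℝ | u ∈ I ∧ ¬ (HasDerivAt G (ggF F u) u ∧ F u ≠ ⊤)} = 0 := by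
    have h1 : ∀ᵐ u ∂(volume : Measure ℝ),
        ¬ (u ∈ I ∧ ¬ (HasDerivAt G (ggF F u) u ∧ F u ≠ ⊤)) := by
      filter_upwards [hder, hfin] with u h1 h2
      rintro ⟨huI, hcon⟩
      exact hcon ⟨h1 huI, h2 huI⟩
    simpa [ae_iff] using h1
  refine ⟨locBdd hpos hlsc, φ, hleft, himg, hmono, ?_, ?_⟩
  · -- integral identity
    rintro a ⟨x, hx, rfl⟩ b ⟨y, hy, rfl⟩ hab
    have hxy : x ≤ y := by
      by_contra h
      push_neg at h
      exact absurd hab (not_le.2 (hsm hy hx h))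
    rw [hleft x hx, hleft y hy]
    have hIcc : Icc x y ⊆ I := hIconn.out hx hy
    obtain ⟨C, hC⟩ := bddCompact hpos hlsc isCompact_Icc hIcc
    have hlip := lipOn hIconn hG' hIcc hC
    have hbad2 : volume {u : ℝ | u ∈ Icc x y ∧ ¬ (HasDerivAt G (ggF F u) u ∧ F u ≠ ⊤)} = 0 := by
      apply measure_mono_null _ hbadnull
      rintro u ⟨hu1, hu2⟩
      exact ⟨hIcc hu1, hu2⟩
    set N := toMeasurable volume {u : ℝ | u ∈ Icc x y ∧ ¬ (HasDerivAt G (ggF F u) u ∧ F u ≠ ⊤)}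
      with hNdef
    have hNnull : volume N = 0 := by rw [hNdef, measure_toMeasurable]; exact hbad2
    set s := Icc x y \ N with hsdef
    have hsmeas : MeasurableSet s := measurableSet_Icc.diff (measurableSet_toMeasurable _ _)
    have hsI : s ⊆ Icc x y := diff_subset
    have hgood : ∀ u ∈ s, HasDerivAt G (ggF F u) u ∧ F u ≠ ⊤ := by
      rintro u ⟨hu1, hu2⟩
      by_contra h
      exact hu2 (subset_toMeasurable _ _ ⟨hu1, h⟩)
    have hdiffnull : volume (Icc x y \ s) = 0 := by
      apply measure_mono_null _ hNnull
      rintro u ⟨hu1, hu2⟩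
      rw [hsdef] at hu2
      simp only [mem_diff, not_and, not_not] at hu2
      exact hu2 hu1
    have hinj' : InjOn G s := hinj.mono (hsI.trans hIcc)
    have hCoV := integral_image_eq_integral_abs_deriv_smul hsmeas
      (fun u hu => (hgood u hu).1.hasDerivWithinAt) hinj' (fun t => (F (φ t)).toReal)
    have hRHS : ∫ u in s, |ggF F u| • (F (φ (G u))).toReal = y - x := by
      rw [setIntegral_congr_fun hsmeas (g := fun _ => (1:ℝ)) ?_]
      · rw [setIntegral_const]
        have hvs : volume s = ENNReal.ofReal (y - x) := by
          rw [hsdef, measure_diff_null hNnull, Real.volume_Icc]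
        rw [measureReal_def, hvs, ENNReal.toReal_ofReal (by linarith), smul_eq_mul, mul_one]
      · intro u hu
        have huI : u ∈ I := hIcc (hsI hu)
        show |ggF F u| • (F (φ (G u))).toReal = (1 : ℝ)
        rw [hleft u huI, abs_of_nonneg (gg_nonneg F u), smul_eq_mul]
        show ((F u)⁻¹).toReal * (F u).toReal = 1
        rw [← ENNReal.toReal_mul, ENNReal.inv_mul_cancel (hpos u huI).ne' (hgood u hu).2,
          ENNReal.toReal_one]
    have hGIcc : G '' Icc x y = Icc (G x) (G y) := by
      apply Subset.antisymm
      · rintro t ⟨u, hu, rfl⟩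
        exact ⟨hsm.monotoneOn hx (hIcc hu) hu.1, hsm.monotoneOn (hIcc hu) hy hu.2⟩
      · exact intermediate_value_Icc hxy (hcont.mono hIcc)
    have himgdiff : volume (Icc (G x) (G y) \ G '' s) = 0 := by
      have hsub2 : Icc (G x) (G y) \ G '' s ⊆ G '' (Icc x y \ s) := by
        rintro t ⟨ht1, ht2⟩
        rw [← hGIcc] at ht1
        obtain ⟨u, hu, rfl⟩ := ht1
        exact ⟨u, ⟨hu, fun hus => ht2 ⟨u, hus, rfl⟩⟩, rfl⟩
      exact measure_mono_null hsub2 (lip_image_null hlip diff_subset hdiffnull)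
    have hae : (G '' s : Set ℝ) =ᵐ[volume] Ioc (G x) (G y) := by
      rw [MeasureTheory.ae_eq_set]
      constructor
      · apply measure_mono_null (t := {G x}) _ (measure_singleton (G x))
        rintro t ⟨ht1, ht2⟩
        have h1 : t ∈ Icc (G x) (G y) := by
          rw [← hGIcc]; exact image_mono hsI ht1
        simp only [mem_Ioc, not_and, not_le] at ht2
        have h3 : ¬ G x < t := fun hlt => absurd h1.2 (not_le.2 (ht2 hlt))
        have : t = G x := le_antisymm (not_lt.1 h3) h1.1
        simp [this]
      · refine measure_mono_null (fun t ht => ?_) himgdiff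
        exact ⟨Ioc_subset_Icc_self ht.1, ht.2⟩
    calc y - x = ∫ u in s, |ggF F u| • (F (φ (G u))).toReal := hRHS.symm
      _ = ∫ t in G '' s, (F (φ t)).toReal := hCoV.symm
      _ = ∫ t in Ioc (G x) (G y), (F (φ t)).toReal := setIntegral_congr_set hae
      _ = ∫ t in (G x)..(G y), (F (φ t)).toReal := (intervalIntegral.integral_of_le hab).symm
  · -- a.e. derivative of φ
    have hGBnull : volume (G '' {u : ℝ | u ∈ I ∧ ¬ (HasDerivAt G (ggF F u) u ∧ F u ≠ ⊤)}) = 0 :=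
      null_image hIopen hIconn hpos hlsc hG' (fun u hu => hu.1) hbadnull
    have hnb : ∀ᵐ t ∂(volume : Measure ℝ),
        t ∉ G '' {u : ℝ | u ∈ I ∧ ¬ (HasDerivAt G (ggF F u) u ∧ F u ≠ ⊤)} := by
      rw [ae_iff]
      simp only [not_not, Set.setOf_mem_eq]
      exact hGBnull
    filter_upwards [hnb] with t ht htJ
    obtain ⟨u, hu, rfl⟩ := htJ
    have hugood : HasDerivAt G (ggF F u) u ∧ F u ≠ ⊤ := by
      by_contra h
      exact ht ⟨u, ⟨hu, h⟩, rfl⟩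
    obtain ⟨ε, hε, hball⟩ := Metric.isOpen_iff.1 hIopen u hu
    have hkey : ∀ e : ℝ, 0 < e → e ≤ ε / 2 →
        (∀ y ∈ Ioo (G (u - e)) (G (u + e)),
          y ∈ G '' I ∧ φ y ∈ Ioo (u - e) (u + e) ∧ G (φ y) = y) ∧
        G u ∈ Ioo (G (u - e)) (G (u + e)) := by
      intro e he1 he2
      have hIccE : Icc (u - e) (u + e) ⊆ I := by
        intro z hz
        apply hball
        rw [Metric.mem_ball, Real.dist_eq, abs_lt]
        constructor <;> [linarith [hz.1]; linarith [hz.2]]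
      constructor
      · intro y hy
        obtain ⟨v, hv, rfl⟩ :=
          intermediate_value_Ioo (by linarith) (hcont.mono hIccE) hy
        have hvI : v ∈ I := hIccE ⟨hv.1.le, hv.2.le⟩
        refine ⟨⟨v, hvI, rfl⟩, ?_, by rw [hleft v hvI]⟩
        rw [hleft v hvI]; exact hv
      · constructor
        · exact hsm (hIccE ⟨le_rfl, by linarith⟩) hu (by linarith)
        · exact hsm hu (hIccE ⟨by linarith, le_rfl⟩) (by linarith)
    have hφcont : ContinuousAt φ (G u) := by
      rw [Metric.continuousAt_iff]
      intro e' he'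
      set e := min (e' / 2) (ε / 2) with hedef
      have he0 : 0 < e := lt_min (by linarith) (by linarith)
      obtain ⟨hmaps, hmem⟩ := hkey e he0 (min_le_right _ _)
      refine ⟨min (G u - G (u - e)) (G (u + e) - G u),
        lt_min (by linarith [hmem.1]) (by linarith [hmem.2]), fun {y} hy => ?_⟩
      have h1 := abs_lt.1 (by rwa [Real.dist_eq] at hy)
      have hyIoo : y ∈ Ioo (G (u - e)) (G (u + e)) := by
        constructor
        · have := min_le_left (G u - G (u - e)) (G (u + e) - G u); linarith [h1.1]
        · have := min_le_right (G u - G (u - e)) (G (u + e) - G u); linarith [h1.2]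
      obtain ⟨_, hφy, _⟩ := hmaps y hyIoo
      rw [Real.dist_eq, hleft u hu, abs_lt]
      have he1 : e ≤ e' / 2 := min_le_left _ _
      constructor <;> [linarith [hφy.1]; linarith [hφy.2]]
    have hinv : ∀ᶠ y in nhds (G u), G (φ y) = y := by
      obtain ⟨hmaps, hmem⟩ := hkey (ε / 4) (by linarith) (by linarith)
      filter_upwards [Ioo_mem_nhds hmem.1 hmem.2] with y hy
      exact (hmaps y hy).2.2
    have hne : ggF F u ≠ 0 := by
      simp only [ggF]
      rw [ENNReal.toReal_ne_zero]
      exact ⟨ENNReal.inv_ne_zero.2 hugood.2, ENNReal.inv_ne_top.2 (hpos u hu).ne'⟩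
    have hd : HasDerivAt φ (ggF F u)⁻¹ (G u) := by
      apply HasDerivAt.of_local_left_inverse hφcont ?_ hne hinv
      rw [hleft u hu]
      exact hugood.1
    have hval : (ggF F u)⁻¹ = (F u).toReal := by
      show (((F u)⁻¹).toReal)⁻¹ = (F u).toReal
      rw [ENNReal.toReal_inv, inv_inv]
    rw [hleft u hu]
    rwa [hval] at hd
end

section
/- Let F : I → (0,+∞] be lower semicontinuous on a nonempty open interval I and finite almost everywhere, G an antiderivative of 1/F, and φ = G⁻¹ on J = G(I). Then for all a ≤ b in J, ∫_a^b F(φ(t)) dt = φ(b) − φ(a); in particular F∘φ is locally integrable on J. -/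
open Set MeasureTheory ENNReal

/-- For the inverse `φ = G⁻¹` of an antiderivative `G` of `1/F`, one has
`∫_a^b F(φ(t)) dt = φ(b) − φ(a)` for all `a ≤ b` in `J = G(I)`; in particular
`F ∘ φ` is locally integrable on `J`. -/
theorem stmt2 (I : Set ℝ) (hIopen : IsOpen I) (hIne : I.Nonempty)
    (hIconn : I.OrdConnected)
    (F : ℝ → ℝ≥0∞) (hFmeas : Measurable F)
    (hpos : ∀ x ∈ I, 0 < F x)
    (hlsc : LowerSemicontinuousOn F I)
    (hfin : ∀ᵐ x ∂(volume : Measure ℝ), x ∈ I → F x ≠ ⊤)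
    (G : ℝ → ℝ)
    (hG : ∀ a ∈ I, ∀ b ∈ I, G b - G a = ∫ x in a..b, ((F x)⁻¹).toReal)
    (φ : ℝ → ℝ)
    (hφinv : ∀ x ∈ I, φ (G x) = x)
    (hφsurj : φ '' (G '' I) = I)
    (hφmono : StrictMonoOn φ (G '' I))
    (hφcont : ContinuousOn φ (G '' I)) :
    ∀ a ∈ G '' I, ∀ b ∈ G '' I, a ≤ b →
      IntervalIntegrable (fun t => (F (φ t)).toReal) volume a b ∧
      (∫ t in a..b, (F (φ t)).toReal) = φ b - φ a := by
  intro a ha b hb hab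
  rcases eq_or_lt_of_le hab with rfl | hlt
  · refine ⟨?_, by simp⟩
    rw [intervalIntegrable_iff]
    simp
  obtain ⟨α, hαI, rfl⟩ := ha
  obtain ⟨β, hβI, rfl⟩ := hb
  set h : ℝ → ℝ := fun x => ((F x)⁻¹).toReal with hh
  -- strict monotonicity of G on I
  have GMono : StrictMonoOn G I := by
    intro x hx y hy hxy
    by_contra hle
    push_neg at hle
    have h2 := hφmono.monotoneOn ⟨y, hy, rfl⟩ ⟨x, hx, rfl⟩ hle
    rw [hφinv y hy, hφinv x hx] at h2
    exact absurd h2 (not_le.mpr hxy)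
  have hαβ : α < β := by
    have := hφmono ⟨α, hαI, rfl⟩ ⟨β, hβI, rfl⟩ hlt
    rwa [hφinv α hαI, hφinv β hβI] at this
  have hsub : Icc α β ⊆ I := hIconn.out hαI hβI
  -- integrability of h on subintervals of I
  have hIntOn : ∀ u ∈ I, ∀ v ∈ I, u < v → IntegrableOn h (Ioc u v) volume := by
    intro u hu v hv huv
    by_contra hni
    have hni' : ¬ IntervalIntegrable h volume u v := by
      rw [intervalIntegrable_iff_integrableOn_Ioc_of_le huv.le]; exact hni
    have h0 := intervalIntegral.integral_undef hni'
    have h1 := hG u hu v hv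
    rw [h0] at h1
    have h2 := GMono hu hv huv
    linarith
  -- lintegral of F⁻¹ over Ioc
  have lintIoc : ∀ u ∈ I, ∀ v ∈ I, u < v →
      ∫⁻ x in Ioc u v, (F x)⁻¹ ∂volume = ENNReal.ofReal (G v - G u) := by
    intro u hu v hv huv
    have hint := hIntOn u hu v hv huv
    have hnn : 0 ≤ᵐ[volume.restrict (Ioc u v)] h :=
      Filter.Eventually.of_forall fun x => ENNReal.toReal_nonneg
    have hOR := ofReal_integral_eq_lintegral_ofReal hint hnn
    rw [hG u hu v hv, intervalIntegral.integral_of_le huv.le, hOR]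
    refine lintegral_congr_ae ?_
    filter_upwards [ae_restrict_mem measurableSet_Ioc] with x hx
    have hxI : x ∈ I := hIconn.out hu hv ⟨hx.1.le, hx.2⟩
    rw [hh]
    rw [ENNReal.ofReal_toReal (ENNReal.inv_ne_top.mpr (hpos x hxI).ne')]
  -- continuity of G on Icc α β
  have hicc : IntegrableOn h (Icc α β) volume := by
    have h2 := hIntOn α hαI β hβI hαβ
    unfold IntegrableOn at h2 ⊢
    rwa [← restrict_Ioc_eq_restrict_Icc]
  have Gcont : ContinuousOn G (Icc α β) := by
    have hprim := intervalIntegral.continuousOn_primitive hicc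
    have : ContinuousOn (fun y => G α + ∫ t in Ioc α y, h t ∂volume) (Icc α β) :=
      continuousOn_const.add hprim
    refine this.congr fun y hy => ?_
    have hyI : y ∈ I := hsub hy
    have := hG α hαI y hyI
    rcases eq_or_lt_of_le hy.1 with rfl | hαy
    · simp
    · rw [intervalIntegral.integral_of_le hy.1] at this
      linarith [this]
  -- IVT
  have hIvt : ∀ c, G α ≤ c → c < G β → ∃ γ ∈ Icc α β, G γ = c ∧ γ < β := by
    intro c hc1 hc2
    have := intermediate_value_Icc hαβ.le Gcont ⟨hc1, hc2.le⟩
    obtain ⟨γ, hγ, hGγ⟩ := this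
    refine ⟨γ, hγ, hGγ, ?_⟩
    rcases eq_or_lt_of_le hγ.2 with rfl | hlt'
    · exact absurd hGγ (by linarith)
    · exact hlt'
  -- clamped version of G
  set Gc : ℝ → ℝ := fun x => G (max α (min x β)) with hGc
  have clampmem : ∀ x : ℝ, max α (min x β) ∈ Icc α β := fun x =>
    ⟨le_max_left _ _, max_le hαβ.le (min_le_right _ _)⟩
  have GcMono : Monotone Gc := by
    intro x y hxy
    exact GMono.monotoneOn.mono hsub (clampmem x) (clampmem y)
      (max_le_max le_rfl (min_le_min hxy le_rfl))
  have GcMeas : Measurable Gc := GcMono.measurable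
  have GcEq : ∀ x ∈ Ioo α β, Gc x = G x := by
    intro x hx
    rw [hGc]
    simp only [min_eq_left hx.2.le, max_eq_right hx.1.le]
  -- the pushforward measure
  set μ0 : Measure ℝ := (volume.restrict (Ioo α β)).withDensity (fun x => (F x)⁻¹) with hμ0
  have hμ0univ : μ0 univ = ENNReal.ofReal (G β - G α) := by
    rw [hμ0, withDensity_apply _ MeasurableSet.univ, Measure.restrict_restrict MeasurableSet.univ,
      univ_inter, restrict_Ioo_eq_restrict_Ioc]
    exact lintIoc α hαI β hβI hαβ
  have hμ0fin : IsFiniteMeasure μ0 := ⟨by rw [hμ0univ]; exact ofReal_lt_top⟩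
  have hmapfin : IsFiniteMeasure (Measure.map Gc μ0) := by
    constructor
    rw [Measure.map_apply GcMeas MeasurableSet.univ, preimage_univ, hμ0univ]
    exact ofReal_lt_top
  have hmapμ : Measure.map Gc μ0 = volume.restrict (Ioo (G α) (G β)) := by
    refine Measure.ext_of_Iic _ _ fun c => ?_
    rw [Measure.map_apply GcMeas measurableSet_Iic, Measure.restrict_apply measurableSet_Iic,
      hμ0, withDensity_apply _ (GcMeas measurableSet_Iic),
      Measure.restrict_restrict (GcMeas measurableSet_Iic)]
    by_cases hc1 : G β ≤ c
    · have hset : Gc ⁻¹' Iic c ∩ Ioo α β = Ioo α β := by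
        refine inter_eq_right.mpr fun x hx => ?_
        have : G x < G β := GMono (hsub ⟨hx.1.le, hx.2.le⟩) hβI hx.2
        simp only [mem_preimage, mem_Iic, GcEq x hx]
        linarith
      have hset2 : Iic c ∩ Ioo (G α) (G β) = Ioo (G α) (G β) :=
        inter_eq_right.mpr fun x hx => le_trans hx.2.le hc1
      rw [hset, hset2, restrict_Ioo_eq_restrict_Ioc, lintIoc α hαI β hβI hαβ,
        Real.volume_Ioo]
    · push_neg at hc1
      by_cases hc2 : G α ≤ c
      · obtain ⟨γ, hγIcc, hGγ, hγβ⟩ := hIvt c hc2 hc1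
        have hγI : γ ∈ I := hsub hγIcc
        have hset : Gc ⁻¹' Iic c ∩ Ioo α β = Ioc α γ := by
          ext x
          simp only [mem_inter_iff, mem_preimage, mem_Iic, mem_Ioo, mem_Ioc]
          constructor
          · rintro ⟨hxc, hx1, hx2⟩
            rw [GcEq x ⟨hx1, hx2⟩] at hxc
            refine ⟨hx1, ?_⟩
            by_contra hgt
            push_neg at hgt
            have : G γ < G x := GMono hγI (hsub ⟨hx1.le, hx2.le⟩) hgt
            rw [hGγ] at this
            linarith
          · rintro ⟨hx1, hx2⟩
            have hxβ : x < β := lt_of_le_of_lt hx2 hγβ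
            have hxI : x ∈ I := hsub ⟨hx1.le, hxβ.le⟩
            refine ⟨?_, hx1, hxβ⟩
            rw [GcEq x ⟨hx1, hxβ⟩]
            have : G x ≤ G γ := GMono.monotoneOn hxI hγI hx2
            rw [hGγ] at this
            exact this
        have hset2 : Iic c ∩ Ioo (G α) (G β) = Ioc (G α) c := by
          ext x
          simp only [mem_inter_iff, mem_Iic, mem_Ioo, mem_Ioc]
          exact ⟨fun ⟨h1, h2, _⟩ => ⟨h2, h1⟩, fun ⟨h1, h2⟩ => ⟨h2, h1, lt_of_le_of_lt h2 hc1⟩⟩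
        rw [hset, hset2, Real.volume_Ioc]
        rcases eq_or_lt_of_le hγIcc.1 with rfl | hαγ
        · rw [← hGγ]
          simp
        · rw [lintIoc α hαI γ hγI hαγ, hGγ]
      · push_neg at hc2
        have hset : Gc ⁻¹' Iic c ∩ Ioo α β = ∅ := by
          refine eq_empty_of_forall_notMem fun x hx => ?_
          have hax : G α < G x := GMono hαI (hsub ⟨hx.2.1.le, hx.2.2.le⟩) hx.2.1
          have : Gc x ≤ c := hx.1
          rw [GcEq x hx.2] at this
          linarith
        have hset2 : Iic c ∩ Ioo (G α) (G β) = ∅ := by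
          refine eq_empty_of_forall_notMem fun x hx => ?_
          have := hx.1
          have := hx.2.1
          simp only [mem_Iic] at *
          linarith
        rw [hset, hset2]
        simp
  -- measurability of φ on Ioo (G α) (G β)
  have hJ : Ioo (G α) (G β) ⊆ G '' I := by
    intro c hc
    obtain ⟨γ, hγ, hGγ, _⟩ := hIvt c hc.1.le hc.2
    exact ⟨γ, hsub hγ, hGγ⟩
  have hφmeas : AEMeasurable φ (volume.restrict (Ioo (G α) (G β))) :=
    (hφcont.mono hJ).aemeasurable measurableSet_Ioo
  have hφae : AEMeasurable (fun t => F (φ t)) (volume.restrict (Ioo (G α) (G β))) :=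
    hFmeas.comp_aemeasurable hφmeas
  -- key lintegral computation
  have key : ∫⁻ t in Ioo (G α) (G β), F (φ t) ∂volume = ENNReal.ofReal (β - α) := by
    have habs : μ0 ≪ volume.restrict (Ioo α β) := withDensity_absolutelyContinuous _ _
    calc ∫⁻ t in Ioo (G α) (G β), F (φ t) ∂volume
        = ∫⁻ t, F (φ t) ∂(Measure.map Gc μ0) := by rw [hmapμ]
      _ = ∫⁻ x, F (φ (Gc x)) ∂μ0 := by
          refine lintegral_map' ?_ GcMeas.aemeasurable
          rw [hmapμ]; exact hφae
      _ = ∫⁻ x, F x ∂μ0 := by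
          refine lintegral_congr_ae ?_
          filter_upwards [habs (ae_restrict_mem measurableSet_Ioo)] with x hx
          rw [GcEq x hx, hφinv x (hsub ⟨hx.1.le, hx.2.le⟩)]
      _ = ∫⁻ x in Ioo α β, ((fun x => (F x)⁻¹) * F) x ∂volume := by
          rw [hμ0]
          exact lintegral_withDensity_eq_lintegral_mul _ hFmeas.inv hFmeas
      _ = ∫⁻ x in Ioo α β, (1 : ℝ≥0∞) ∂volume := by
          refine lintegral_congr_ae ?_
          filter_upwards [ae_restrict_mem measurableSet_Ioo,
            ae_restrict_of_ae hfin] with x hx hfx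
          have hxI : x ∈ I := hsub ⟨hx.1.le, hx.2.le⟩
          simp only [Pi.mul_apply]
          exact ENNReal.inv_mul_cancel (hpos x hxI).ne' (hfx hxI)
      _ = ENNReal.ofReal (β - α) := by
          rw [lintegral_one, Measure.restrict_apply MeasurableSet.univ, univ_inter,
            Real.volume_Ioo]
  -- transfer to Ioc
  rw [restrict_Ioo_eq_restrict_Ioc] at key hφae
  have hlttop : ∀ᵐ t ∂(volume.restrict (Ioc (G α) (G β))), F (φ t) < ⊤ :=
    ae_lt_top' hφae (by rw [key]; exact ofReal_ne_top)
  have hintegrable : IntegrableOn (fun t => (F (φ t)).toReal) (Ioc (G α) (G β)) volume :=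
    integrable_toReal_of_lintegral_ne_top hφae (by rw [key]; exact ofReal_ne_top)
  constructor
  · exact (intervalIntegrable_iff_integrableOn_Ioc_of_le hlt.le).mpr hintegrable
  · rw [intervalIntegral.integral_of_le hlt.le]
    rw [integral_toReal hφae hlttop, key, ENNReal.toReal_ofReal (by linarith)]
    rw [hφinv α hαI, hφinv β hβI]
end

section
/- Let X be a metric space, K : X → [0,∞] lower semicontinuous, and a ≤ b real numbers. Then the map γ ↦ inf_{t ∈ [a,b]} K(γ(t)) is lower semicontinuous on the space C([a,b], X) of continuous curves endowed with the topology of uniform convergence. -/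
open Set MeasureTheory ENNReal

/-- If `K` is lower semicontinuous then `γ ↦ inf_{t ∈ [a,b]} K (γ t)` is lower
semicontinuous on `C([a,b], X)` with the uniform-convergence (compact-open)
topology. -/
theorem stmt5 {X : Type*} [MetricSpace X] (K : X → ℝ≥0∞)
    (hK : LowerSemicontinuous K) (a b : ℝ) (hab : a ≤ b) :
    LowerSemicontinuous (fun γ : C(Set.Icc a b, X) => ⨅ t : Set.Icc a b, K (γ t)) := by
  intro γ c hc
  obtain ⟨c', hcc', hc'⟩ := exists_between hc
  have hUopen : IsOpen {x | c' < K x} := hK.isOpen_preimage c'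
  have hs : IsCompact (range γ) := isCompact_range γ.continuous
  have hsub : range γ ⊆ {x | c' < K x} := by
    rintro x ⟨t, rfl⟩
    exact lt_of_lt_of_le hc' (iInf_le _ t)
  obtain ⟨δ, hδ, hthick⟩ := hs.exists_thickening_subset_open hUopen hsub
  rw [Metric.eventually_nhds_iff]
  refine ⟨δ, hδ, fun γ' hγ' => ?_⟩
  refine lt_of_lt_of_le hcc' (le_iInf fun t => ?_)
  have hmem : γ' t ∈ Metric.thickening δ (range γ) := by
    rw [Metric.mem_thickening_iff]
    exact ⟨γ t, mem_range_self t, lt_of_le_of_lt (ContinuousMap.dist_apply_le_dist t) hγ'⟩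
  exact le_of_lt (hthick hmem)
end

section
/- Let X be a metric space, K : X → [0,∞] lower semicontinuous, and I ⊂ ℝ an interval. Then the functional A_K(γ) := sup over finite subdivisions t_0 ≤ … ≤ t_N in I of Σ_i (inf_{[t_i,t_{i+1}]} K∘γ) · d(γ(t_i), γ(t_{i+1})) is lower semicontinuous on C(I, X) endowed with the topology of uniform convergence on compact subsets of I. -/
open Set MeasureTheory ENNReal Filter Topology

/-- The generalized weighted-length functional
`A_K(γ) = sup Σᵢ (inf_{[tᵢ,tᵢ₊₁]} K∘γ) d(γ(tᵢ), γ(tᵢ₊₁))`. -/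
noncomputable def AK {X : Type*} [EMetricSpace X] (K : X → ℝ≥0∞) (I : Set ℝ)
    (γ : ℝ → X) : ℝ≥0∞ :=
  ⨆ (N : ℕ) (t : Fin (N + 1) → ℝ) (_ : ∀ i, t i ∈ I) (_ : Monotone t),
    ∑ i : Fin N,
      (⨅ s ∈ Set.Icc (t i.castSucc) (t i.succ), K (γ s)) *
        edist (γ (t i.castSucc)) (γ (t i.succ))

/-- Lower semicontinuity of the infimum of a l.s.c. weight along uniformly
converging curves on a compact segment. -/
lemma inf_aux {X : Type*} [MetricSpace X] {K : X → ℝ≥0∞}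
    (hK : LowerSemicontinuous K) {a b : ℝ} {γ : ℝ → X} {γn : ℕ → ℝ → X}
    (hγ : ContinuousOn γ (Set.Icc a b))
    (hconv : TendstoUniformlyOn (fun n => γn n) γ atTop (Set.Icc a b)) :
    (⨅ s ∈ Set.Icc a b, K (γ s)) ≤
      liminf (fun n => ⨅ s ∈ Set.Icc a b, K (γn n s)) atTop := by
  rw [le_liminf_iff]
  intro c hc
  obtain ⟨c', hcc', hc'⟩ := exists_between hc
  have hU : IsOpen {x : X | c' < K x} := hK.isOpen_preimage c'
  have hΓ : IsCompact (γ '' Set.Icc a b) := isCompact_Icc.image_of_continuousOn hγ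
  have hΓU : γ '' Set.Icc a b ⊆ {x : X | c' < K x} := by
    rintro _ ⟨s, hs, rfl⟩
    exact lt_of_lt_of_le hc' (biInf_le (fun s => K (γ s)) hs)
  obtain ⟨ε, εpos, hε⟩ := hΓ.exists_thickening_subset_open hU hΓU
  have := (Metric.tendstoUniformlyOn_iff.mp hconv) ε εpos
  filter_upwards [this] with n hn
  refine lt_of_lt_of_le hcc' (le_iInf₂ fun s hs => ?_)
  have : γn n s ∈ Metric.thickening ε (γ '' Set.Icc a b) := by
    rw [Metric.mem_thickening_iff]
    exact ⟨γ s, ⟨s, hs, rfl⟩, by simpa [dist_comm] using hn s hs⟩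
  exact (hε this).le

lemma ennreal_le_liminf_add {u v : ℕ → ℝ≥0∞} :
    liminf u atTop + liminf v atTop ≤ liminf (fun n => u n + v n) atTop := by
  rw [le_liminf_iff]
  intro c hc
  rcases eq_or_ne (liminf u atTop) 0 with h0 | h0
  · rw [h0, zero_add] at hc
    filter_upwards [eventually_lt_of_lt_liminf hc] with n hn
    exact hn.trans_le (le_add_left le_rfl)
  rcases eq_or_ne (liminf v atTop) 0 with h1 | h1
  · rw [h1, add_zero] at hc
    filter_upwards [eventually_lt_of_lt_liminf hc] with n hn
    exact hn.trans_le (le_add_right le_rfl)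
  obtain ⟨y, hy, z, hz, hc'⟩ := ENNReal.exists_lt_add_of_lt_add hc h0 h1
  filter_upwards [eventually_lt_of_lt_liminf hy, eventually_lt_of_lt_liminf hz]
    with n h1 h2
  exact hc'.trans_le (add_le_add h1.le h2.le)

lemma sum_liminf_le {ι : Type*} (s : Finset ι) (f : ι → ℕ → ℝ≥0∞) :
    ∑ i ∈ s, liminf (f i) atTop ≤ liminf (fun n => ∑ i ∈ s, f i n) atTop := by
  classical
  induction s using Finset.induction_on with
  | empty => simp
  | insert _ _ hx ih =>
    rename_i a s'
    simp only [Finset.sum_insert hx]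
    calc liminf (f a) atTop + ∑ i ∈ s', liminf (f i) atTop
        ≤ liminf (f a) atTop + liminf (fun n => ∑ i ∈ s', f i n) atTop :=
          add_le_add_right ih _
      _ ≤ liminf (fun n => f a n + ∑ i ∈ s', f i n) atTop := ennreal_le_liminf_add

/-- For l.s.c. `K`, the functional `A_K` is (sequentially) lower semicontinuous
on `C(I, X)` for the topology of uniform convergence on compact subsets of `I`. -/
theorem stmt6 {X : Type*} [MetricSpace X] (K : X → ℝ≥0∞)
    (hK : LowerSemicontinuous K) (I : Set ℝ) (hI : I.OrdConnected)
    (γ : ℝ → X) (γn : ℕ → ℝ → X)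
    (hcont : ∀ n, ContinuousOn (γn n) I) (hγ : ContinuousOn γ I)
    (hconv : ∀ C : Set ℝ, IsCompact C → C ⊆ I →
      TendstoUniformlyOn (fun n => γn n) γ atTop C) :
    AK K I γ ≤ liminf (fun n => AK K I (γn n)) atTop := by
  rw [AK]
  refine iSup_le fun N => iSup_le fun t => iSup_le fun ht => iSup_le fun hmono => ?_
  have key : ∀ i : Fin N,
      (⨅ s ∈ Set.Icc (t i.castSucc) (t i.succ), K (γ s)) *
          edist (γ (t i.castSucc)) (γ (t i.succ)) ≤
        liminf (fun n => (⨅ s ∈ Set.Icc (t i.castSucc) (t i.succ), K (γn n s)) *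
          edist (γn n (t i.castSucc)) (γn n (t i.succ))) atTop := by
    intro i
    set a := t i.castSucc with ha
    set b := t i.succ with hb
    have hsub : Set.Icc a b ⊆ I := hI.out (ht _) (ht _)
    have h1 := inf_aux hK (hγ.mono hsub) (hconv (Set.Icc a b) isCompact_Icc hsub)
    have hpt : ∀ x, x ∈ I → Tendsto (fun n => γn n x) atTop (𝓝 (γ x)) := by
      intro x hx
      exact (hconv {x} isCompact_singleton (singleton_subset_iff.mpr hx)).tendsto_at rfl
    have h2 : Tendsto (fun n => edist (γn n a) (γn n b)) atTop
        (𝓝 (edist (γ a) (γ b))) :=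
      (hpt a (ht _)).edist (hpt b (ht _))
    calc (⨅ s ∈ Set.Icc a b, K (γ s)) * edist (γ a) (γ b)
        ≤ liminf (fun n => ⨅ s ∈ Set.Icc a b, K (γn n s)) atTop *
            liminf (fun n => edist (γn n a) (γn n b)) atTop := by
          exact mul_le_mul' h1 (h2.liminf_eq ▸ le_rfl)
      _ ≤ liminf (fun n => (⨅ s ∈ Set.Icc a b, K (γn n s)) *
            edist (γn n a) (γn n b)) atTop := ENNReal.le_liminf_mul
  calc ∑ i : Fin N, (⨅ s ∈ Set.Icc (t i.castSucc) (t i.succ), K (γ s)) *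
          edist (γ (t i.castSucc)) (γ (t i.succ))
      ≤ ∑ i : Fin N, liminf (fun n =>
            (⨅ s ∈ Set.Icc (t i.castSucc) (t i.succ), K (γn n s)) *
              edist (γn n (t i.castSucc)) (γn n (t i.succ))) atTop :=
        Finset.sum_le_sum fun i _ => key i
    _ ≤ liminf (fun n => ∑ i : Fin N,
            (⨅ s ∈ Set.Icc (t i.castSucc) (t i.succ), K (γn n s)) *
              edist (γn n (t i.castSucc)) (γn n (t i.succ))) atTop :=
        sum_liminf_le _ _
    _ ≤ liminf (fun n => AK K I (γn n)) atTop := by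
        refine liminf_le_liminf (Eventually.of_forall fun n => ?_)
        rw [AK]
        exact le_iSup_of_le N (le_iSup_of_le t (le_iSup_of_le ht
          (le_iSup_of_le hmono le_rfl)))
end

section
/- Let f, E : J → (0,∞) be C² functions on an open interval J ⊂ ℝ satisfying f''/f ≥ c₀ f^{p₀−2} and E''/E = c E^{p₀−2} on J, where 0 < c < c₀ and p₀ ≥ 2. Suppose J = (r₁, r₂) is bounded, f > E on J, and f = E at both endpoints (by continuity). Then a contradiction arises; i.e., there is no such f. Equivalently: if f''/f ≥ c₀ f^{p₀−2} and f ≥ E on a bounded interval with equality at the endpoints, and E''/E = c E^{p₀−2} with c < c₀, then f ≡ E. -/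
open Set Filter

lemma second_deriv_test_aux (h h' : ℝ → ℝ) {a b x₀ d : ℝ} (hx : x₀ ∈ Set.Ioo a b)
    (hd : ∀ x ∈ Set.Ioo a b, HasDerivAt h (h' x) x)
    (h'0 : h' x₀ = 0) (hd2 : HasDerivAt h' d x₀) (hdpos : 0 < d)
    (hmax : IsLocalMax h x₀) : False := by
  have hslope : Tendsto (slope h' x₀) (nhdsWithin x₀ {x₀}ᶜ) (nhds d) :=
    hasDerivAt_iff_tendsto_slope.1 hd2
  have h1 : ∀ᶠ x in nhdsWithin x₀ (Set.Ioi x₀), 0 < slope h' x₀ x := by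
    have := hslope.eventually (eventually_gt_nhds hdpos)
    exact this.filter_mono (nhdsWithin_mono _ (fun y hy => ne_of_gt hy))
  have h2 : ∀ᶠ x in nhdsWithin x₀ (Set.Ioi x₀), x ∈ Set.Ioo a b :=
    eventually_nhdsWithin_of_eventually_nhds ((isOpen_Ioo.eventually_mem hx))
  have h3 : ∀ᶠ x in nhdsWithin x₀ (Set.Ioi x₀), h x ≤ h x₀ :=
    eventually_nhdsWithin_of_eventually_nhds hmax
  obtain ⟨u, hu, hsub⟩ := mem_nhdsGT_iff_exists_Ioc_subset.1
    ((h1.and (h2.and h3)).filter_mono le_rfl)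
  have hu' : x₀ < u := hu
  have hIccIoo : Set.Icc x₀ u ⊆ Set.Ioo a b := by
    intro y hy
    rcases eq_or_lt_of_le hy.1 with rfl | hlt
    · exact hx
    · exact (hsub ⟨hlt, hy.2⟩).2.1
  have hmono : StrictMonoOn h (Set.Icc x₀ u) := by
    apply strictMonoOn_of_deriv_pos (convex_Icc _ _)
    · intro y hy
      exact ((hd y (hIccIoo hy)).differentiableAt).continuousAt.continuousWithinAt
    · intro y hy
      rw [interior_Icc] at hy
      have hy' := hsub ⟨hy.1, hy.2.le⟩
      have hs := hy'.1
      rw [slope_def_field] at hs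
      have : 0 < h' y := by
        have hpos : 0 < y - x₀ := sub_pos.2 hy.1
        rw [div_pos_iff] at hs
        rcases hs with ⟨hn, _⟩ | ⟨_, hneg⟩
        · linarith [hn, h'0]
        · linarith
      rwa [(hd y (hy'.2.1)).deriv]
  have := hmono (Set.left_mem_Icc.2 hu'.le) (Set.right_mem_Icc.2 hu'.le) hu'
  exact absurd (hsub ⟨hu', le_rfl⟩).2.2 (not_le.2 this)

/-- Comparison principle for the funnel ODE: if `f''/f ≥ c₀ f^{p₀−2}` and
`E''/E = c E^{p₀−2}` with `0 < c < c₀` on a bounded interval, `f ≥ E` inside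
with equality at the endpoints, then `f ≡ E`. -/
theorem stmt10 (c c₀ p₀ r₁ r₂ : ℝ) (hc : 0 < c) (hcc : c < c₀) (hp : 2 ≤ p₀)
    (hr : r₁ < r₂)
    (f f' f'' E E' E'' : ℝ → ℝ)
    (hfc : ContinuousOn f (Set.Icc r₁ r₂)) (hEc : ContinuousOn E (Set.Icc r₁ r₂))
    (hfpos : ∀ x ∈ Set.Icc r₁ r₂, 0 < f x)
    (hEpos : ∀ x ∈ Set.Icc r₁ r₂, 0 < E x)
    (hfd : ∀ x ∈ Set.Ioo r₁ r₂, HasDerivAt f (f' x) x)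
    (hfd2 : ∀ x ∈ Set.Ioo r₁ r₂, HasDerivAt f' (f'' x) x)
    (hEd : ∀ x ∈ Set.Ioo r₁ r₂, HasDerivAt E (E' x) x)
    (hEd2 : ∀ x ∈ Set.Ioo r₁ r₂, HasDerivAt E' (E'' x) x)
    (hfode : ∀ x ∈ Set.Ioo r₁ r₂, c₀ * f x ^ (p₀ - 2) ≤ f'' x / f x)
    (hEode : ∀ x ∈ Set.Ioo r₁ r₂, E'' x / E x = c * E x ^ (p₀ - 2))
    (hge : ∀ x ∈ Set.Icc r₁ r₂, E x ≤ f x)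
    (h1 : f r₁ = E r₁) (h2 : f r₂ = E r₂) :
    ∀ x ∈ Set.Icc r₁ r₂, f x = E x := by
  have hIoosub : Set.Ioo r₁ r₂ ⊆ Set.Icc r₁ r₂ := Set.Ioo_subset_Icc_self
  have hEne : ∀ x ∈ Set.Icc r₁ r₂, E x ≠ 0 := fun x hx => (hEpos x hx).ne'
  set g : ℝ → ℝ := fun x => f x / E x with hg
  have hgc : ContinuousOn g (Set.Icc r₁ r₂) := hfc.div hEc hEne
  obtain ⟨x₀, hx₀, hmax⟩ := isCompact_Icc.exists_isMaxOn (Set.nonempty_Icc.2 hr.le) hgc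
  by_cases hle : g x₀ ≤ 1
  · intro x hx
    have hgx : g x ≤ 1 := le_trans (hmax hx) hle
    have : f x ≤ E x := (div_le_one (hEpos x hx)).1 hgx
    linarith [hge x hx]
  · exfalso
    push_neg at hle
    -- x₀ is interior
    have hg1 : g r₁ = 1 := by
      simp only [hg, h1]; exact div_self (hEne r₁ ⟨le_refl _, hr.le⟩)
    have hg2 : g r₂ = 1 := by
      simp only [hg, h2]; exact div_self (hEne r₂ ⟨hr.le, le_refl _⟩)
    have hne1 : x₀ ≠ r₁ := by intro h; rw [h, hg1] at hle; exact lt_irrefl _ hle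
    have hne2 : x₀ ≠ r₂ := by intro h; rw [h, hg2] at hle; exact lt_irrefl _ hle
    have hxIoo : x₀ ∈ Set.Ioo r₁ r₂ :=
      ⟨lt_of_le_of_ne hx₀.1 (Ne.symm hne1), lt_of_le_of_ne hx₀.2 hne2⟩
    -- derivative of g
    set g' : ℝ → ℝ := fun x => (f' x * E x - f x * E' x) / E x ^ 2 with hg'
    have hgd : ∀ x ∈ Set.Ioo r₁ r₂, HasDerivAt g (g' x) x := fun x hx =>
      (hfd x hx).div (hEd x hx) (hEne x (hIoosub hx))
    have hlm : IsLocalMax g x₀ := hmax.isLocalMax (Icc_mem_nhds hxIoo.1 hxIoo.2)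
    have hg'0 : g' x₀ = 0 := hlm.hasDerivAt_eq_zero (hgd x₀ hxIoo)
    have hE0 : 0 < E x₀ := hEpos x₀ (hIoosub hxIoo)
    have hf0 : 0 < f x₀ := hfpos x₀ (hIoosub hxIoo)
    have hN0 : f' x₀ * E x₀ - f x₀ * E' x₀ = 0 := by
      have hE2 : (E x₀ : ℝ) ^ 2 ≠ 0 := pow_ne_zero 2 hE0.ne'
      have := hg'0
      simp only [hg'] at this
      exact (div_eq_zero_iff.1 this).resolve_right hE2
    -- second derivative of g at x₀
    set d : ℝ := ((f'' x₀ * E x₀ + f' x₀ * E' x₀ - (f' x₀ * E' x₀ + f x₀ * E'' x₀)) * E x₀ ^ 2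
        - (f' x₀ * E x₀ - f x₀ * E' x₀) * ((2 : ℕ) * E x₀ ^ (2 - 1) * E' x₀)) / (E x₀ ^ 2) ^ 2
      with hdd
    have hgd2 : HasDerivAt g' d x₀ := by
      have hN : HasDerivAt (fun x => f' x * E x - f x * E' x)
          (f'' x₀ * E x₀ + f' x₀ * E' x₀ - (f' x₀ * E' x₀ + f x₀ * E'' x₀)) x₀ :=
        ((hfd2 x₀ hxIoo).mul (hEd x₀ hxIoo)).sub ((hfd x₀ hxIoo).mul (hEd2 x₀ hxIoo))
      have hD : HasDerivAt (fun x => E x ^ 2) ((2 : ℕ) * E x₀ ^ (2 - 1) * E' x₀) x₀ :=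
        (hEd x₀ hxIoo).pow 2
      exact hN.div hD (pow_ne_zero 2 hE0.ne')
    have hdle : d ≤ 0 := by
      by_contra hpos
      push_neg at hpos
      exact second_deriv_test_aux g g' hxIoo hgd hg'0 hgd2 hpos hlm
    -- extract f'' E ≤ f E''
    have hkey : f'' x₀ * E x₀ ≤ f x₀ * E'' x₀ := by
      have hE2 : (0 : ℝ) < (E x₀ ^ 2) ^ 2 := pow_pos (pow_pos hE0 2) 2
      rw [hdd, hN0] at hdle
      have hnum : (f'' x₀ * E x₀ + f' x₀ * E' x₀ - (f' x₀ * E' x₀ + f x₀ * E'' x₀)) * E x₀ ^ 2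
          - 0 * ((2 : ℕ) * E x₀ ^ (2 - 1) * E' x₀) ≤ 0 := by
        by_contra hn
        push_neg at hn
        exact absurd (div_pos hn hE2) (not_lt.2 hdle)
      nlinarith [sq_nonneg (E x₀), pow_pos hE0 2]
    have hratio : f'' x₀ / f x₀ ≤ E'' x₀ / E x₀ :=
      (div_le_div_iff₀ hf0 hE0).2 (by linarith)
    have hrpow : E x₀ ^ (p₀ - 2) ≤ f x₀ ^ (p₀ - 2) :=
      Real.rpow_le_rpow hE0.le (hge x₀ (hIoosub hxIoo)) (by linarith)
    have hfp : 0 < f x₀ ^ (p₀ - 2) := Real.rpow_pos_of_pos hf0 _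
    have h5 := hfode x₀ hxIoo
    have h6 := hEode x₀ hxIoo
    nlinarith [mul_le_mul_of_nonneg_left hrpow hc.le,
      mul_lt_mul_of_pos_right hcc hfp]
end

section
/- Let W : ℝⁿ → ℝ be C² with Hessian bounded below by λ·Id (λ ≤ 0), and let ρ : ℝ → [0,∞) be a mollifier with unit mass supported in [−δ,δ]. Then for every v ∈ H¹_loc(ℝ, ℝⁿ), ∫_ℝ W((v*ρ)(s)) ds ≤ ∫_ℝ W(v(t)) dt + 4δ²|λ| ∫_ℝ |v'(s)|² ds (whenever both integrals of W are well defined). -/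
open Set MeasureTheory Convolution


lemma convex_aux {n : ℕ} (lam : ℝ)
    (W : EuclideanSpace ℝ (Fin n) → ℝ) (hW : ContDiff ℝ 2 W)
    (hHess : ∀ x v : EuclideanSpace ℝ (Fin n),
      lam * ‖v‖ ^ 2 ≤ iteratedFDeriv ℝ 2 W x ![v, v]) :
    ConvexOn ℝ Set.univ (fun x => W x - lam / 2 * ‖x‖ ^ 2) := by
  refine ⟨convex_univ, ?_⟩
  intro x _ y _ a b ha hb hab
  set u : EuclideanSpace ℝ (Fin n) := y - x with hu
  set γ : ℝ → EuclideanSpace ℝ (Fin n) := fun t => x + t • u with hγdef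
  have hγ : ∀ t : ℝ, HasDerivAt γ u t := by
    intro t
    exact (((hasDerivAt_id t).smul_const u).const_add x).congr_deriv (one_smul ℝ u)
  have hWd : Differentiable ℝ W := hW.differentiable (by norm_num)
  have hW'd : Differentiable ℝ (fderiv ℝ W) :=
    (hW.fderiv_right (m := 1) (by norm_num)).differentiable one_ne_zero
  have hnorm : ∀ t : ℝ, ‖γ t‖ ^ 2
      = ‖x‖ ^ 2 + 2 * (t * inner ℝ x u) + t ^ 2 * ‖u‖ ^ 2 := by
    intro t
    have h0 : (inner ℝ (γ t) (γ t) : ℝ)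
        = inner ℝ x x + 2 * (t * inner ℝ x u) + t ^ 2 * (inner ℝ u u : ℝ) := by
      simp only [hγdef, real_inner_add_add_self, real_inner_smul_right, real_inner_smul_left]
      ring
    rw [← real_inner_self_eq_norm_sq, h0, real_inner_self_eq_norm_sq,
      real_inner_self_eq_norm_sq]
  set φ : ℝ → ℝ := fun t => W (γ t) - lam / 2 * ‖γ t‖ ^ 2 with hφdef
  set ψ : ℝ → ℝ := fun t =>
    fderiv ℝ W (γ t) u - lam / 2 * (2 * inner ℝ x u + 2 * t * ‖u‖ ^ 2) with hψdef
  have hφ' : ∀ t : ℝ, HasDerivAt φ (ψ t) t := by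
    intro t
    have h1 : HasDerivAt (fun t => W (γ t)) (fderiv ℝ W (γ t) u) t :=
      (hWd (γ t)).hasFDerivAt.comp_hasDerivAt t (hγ t)
    have h2 : HasDerivAt (fun t : ℝ => lam / 2 * ‖γ t‖ ^ 2)
        (lam / 2 * (2 * inner ℝ x u + 2 * t * ‖u‖ ^ 2)) t := by
      have h3 : HasDerivAt (fun t : ℝ =>
          ‖x‖ ^ 2 + 2 * (t * inner ℝ x u) + t ^ 2 * ‖u‖ ^ 2)
          (2 * inner ℝ x u + 2 * t * ‖u‖ ^ 2) t := by
        have := (((hasDerivAt_id t).mul_const (inner ℝ x u : ℝ)).const_mul 2).const_add (‖x‖ ^ 2)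
        have h4 := ((hasDerivAt_pow 2 t).mul_const (‖u‖ ^ 2))
        exact (this.add h4).congr_deriv (by norm_num)
      have := h3.const_mul (lam / 2)
      refine HasDerivAt.congr_deriv (this.congr_of_eventuallyEq ?_) rfl
      filter_upwards with t using by rw [hnorm t]
    exact h1.sub h2
  have hψ' : ∀ t : ℝ, HasDerivAt ψ
      (fderiv ℝ (fderiv ℝ W) (γ t) u u - lam * ‖u‖ ^ 2) t := by
    intro t
    have hA : HasDerivAt (fun t => fderiv ℝ W (γ t)) (fderiv ℝ (fderiv ℝ W) (γ t) u) t :=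
      (hW'd (γ t)).hasFDerivAt.comp_hasDerivAt t (hγ t)
    have h1 : HasDerivAt (fun t => fderiv ℝ W (γ t) u)
        (fderiv ℝ (fderiv ℝ W) (γ t) u u) t := by
      simpa using hA.clm_apply (hasDerivAt_const t u)
    have h2 : HasDerivAt (fun t : ℝ => lam / 2 * (2 * inner ℝ x u + 2 * t * ‖u‖ ^ 2))
        (lam * ‖u‖ ^ 2) t := by
      have := (((hasDerivAt_id t).const_mul (2:ℝ)).mul_const (‖u‖ ^ 2)).const_add
        (2 * (inner ℝ x u : ℝ))
      have := this.const_mul (lam / 2)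
      exact this.congr_deriv (by ring)
    exact h1.sub h2
  have hφconv : ConvexOn ℝ Set.univ φ := by
    have hd1 : Differentiable ℝ φ := fun t => (hφ' t).differentiableAt
    have hdφ : deriv φ = ψ := funext fun t => (hφ' t).deriv
    have hd2 : Differentiable ℝ (deriv φ) := by
      rw [hdφ]; exact fun t => (hψ' t).differentiableAt
    refine convexOn_univ_of_deriv2_nonneg hd1 hd2 ?_
    intro t
    have : deriv^[2] φ t = deriv (deriv φ) t := by
      simp [Function.iterate_succ, Function.iterate_one]
    rw [this, hdφ, (hψ' t).deriv]
    have h5 := hHess (γ t) u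
    rw [iteratedFDeriv_two_apply] at h5
    simp only [Matrix.cons_val_zero, Matrix.cons_val_one, Matrix.head_cons] at h5
    linarith
  have key := hφconv.2 (Set.mem_univ (0:ℝ)) (Set.mem_univ (1:ℝ)) ha hb hab
  have e0 : γ 0 = x := by simp [hγdef]
  have e1 : γ 1 = y := by simp [hγdef, hu]
  have eb : γ b = a • x + b • y := by
    rw [hγdef]
    simp only [hu, smul_sub]
    have : a = 1 - b := by linarith
    rw [this]
    module
  have eφ0 : φ 0 = W x - lam / 2 * ‖x‖ ^ 2 := by rw [hφdef]; simp [e0]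
  have eφ1 : φ 1 = W y - lam / 2 * ‖y‖ ^ 2 := by rw [hφdef]; simp [e1]
  have eφb : φ (a • (0:ℝ) + b • 1) = W (a • x + b • y) - lam / 2 * ‖a • x + b • y‖ ^ 2 := by
    have : a • (0:ℝ) + b • (1:ℝ) = b := by simp
    rw [this, hφdef]
    simp [eb]
  rw [eφb, eφ0, eφ1] at key
  simpa using key


set_option maxHeartbeats 2000000 in
/-- Convolution with a mollifier supported in `[−δ,δ]` increases the integral of a
`λ`-convex (`∇²W ≥ λ Id`, `λ ≤ 0`) potential `W` along an `H¹` curve by at most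
`4δ²|λ| ∫ |v'|²`. -/
theorem stmt14 {n : ℕ} (lam : ℝ) (hlam : lam ≤ 0)
    (W : EuclideanSpace ℝ (Fin n) → ℝ) (hW : ContDiff ℝ 2 W)
    (hHess : ∀ x v : EuclideanSpace ℝ (Fin n),
      lam * ‖v‖ ^ 2 ≤ iteratedFDeriv ℝ 2 W x ![v, v])
    (δ : ℝ) (hδ : 0 < δ)
    (ρ : ℝ → ℝ) (hρc : Continuous ρ) (hρ0 : ∀ t, 0 ≤ ρ t)
    (hρ1 : (∫ t, ρ t) = 1) (hρsupp : ∀ t, ρ t ≠ 0 → t ∈ Set.Icc (-δ) δ)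
    (v v' : ℝ → EuclideanSpace ℝ (Fin n))
    (hvloc : LocallyIntegrable v volume)
    (hAC : ∀ s t : ℝ, s ≤ t → v t - v s = ∫ u in s..t, v' u)
    (hv'2 : Integrable (fun t => ‖v' t‖ ^ 2) volume)
    (hint1 : Integrable (fun t => W (v t)) volume)
    (hint2 : Integrable (fun s => W (∫ t, ρ (s - t) • v t)) volume) :
    (∫ s, W (∫ t, ρ (s - t) • v t)) ≤
      (∫ t, W (v t)) + 4 * δ ^ 2 * |lam| * ∫ t, ‖v' t‖ ^ 2 := by
  have hgconv := convex_aux lam W hW hHess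
  -- norm measurable
  have hnm : AEStronglyMeasurable (fun t => ‖v' t‖) volume := by
    have h1 := hv'2.1
    have : (fun t => ‖v' t‖) = fun t => Real.sqrt (‖v' t‖ ^ 2) := by
      funext t; rw [Real.sqrt_sq (norm_nonneg _)]
    rw [this]
    exact Real.continuous_sqrt.comp_aestronglyMeasurable h1
  -- interval integrability of the norm
  have hni : ∀ a c : ℝ, IntegrableOn (fun t => ‖v' t‖) (Icc a c) := by
    intro a c
    have hc : IntegrableOn (fun _ : ℝ => (1:ℝ)) (Icc a c) := by
      refine integrableOn_const ?_
      simp only [Real.volume_Icc]; exact ENNReal.ofReal_ne_top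
    refine Integrable.mono' (hc.add hv'2.integrableOn) hnm.restrict ?_
    filter_upwards with t
    simp only [Pi.add_apply, Real.norm_eq_abs, abs_of_nonneg (norm_nonneg _)]
    nlinarith [norm_nonneg (v' t), sq_nonneg (‖v' t‖ - 1)]
  have hii : ∀ a c : ℝ, IntervalIntegrable (fun t => ‖v' t‖) volume a c := by
    intro a c
    rw [intervalIntegrable_iff]
    exact (hni (a ⊓ c) (a ⊔ c)).mono_set Set.uIoc_subset_uIcc
  -- v is continuous
  have hvc : Continuous v := by
    rw [continuous_iff_continuousAt]
    intro t₀
    rw [ContinuousAt, tendsto_iff_norm_sub_tendsto_zero]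
    have hbound : ∀ t : ℝ, ‖v t - v t₀‖ ≤ |∫ u in t₀..t, ‖v' u‖| := by
      intro t
      rcases le_total t₀ t with hle | hle
      · rw [hAC t₀ t hle]
        refine (intervalIntegral.norm_integral_le_integral_norm hle).trans (le_abs_self _)
      · have h5 : v t - v t₀ = -(v t₀ - v t) := by abel
        rw [h5, norm_neg, hAC t t₀ hle]
        have h6 := intervalIntegral.norm_integral_le_integral_norm
          (f := v') (μ := volume) hle
        refine h6.trans ?_
        rw [intervalIntegral.integral_symm t t₀, abs_neg,
          abs_of_nonneg (intervalIntegral.integral_nonneg hle fun u _ => norm_nonneg _)]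
    have hcont : Continuous fun t => ∫ u in t₀..t, ‖v' u‖ :=
      intervalIntegral.continuous_primitive (fun a c => hii a c) t₀
    have h0 : Filter.Tendsto (fun t => |∫ u in t₀..t, ‖v' u‖|) (nhds t₀) (nhds 0) := by
      have := (hcont.abs).tendsto t₀
      simpa using this
    exact squeeze_zero (fun t => norm_nonneg _) hbound h0
  -- oscillation bound
  have hosc : ∀ s t₁ t₂ : ℝ, t₁ ∈ Icc (s - δ) (s + δ) → t₂ ∈ Icc (s - δ) (s + δ) →
      ‖v t₁ - v t₂‖ ≤ ∫ u in Icc (s - δ) (s + δ), ‖v' u‖ := by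
    intro s t₁ t₂ h1 h2
    have main : ∀ a c : ℝ, a ∈ Icc (s - δ) (s + δ) → c ∈ Icc (s - δ) (s + δ) → a ≤ c →
        ‖v c - v a‖ ≤ ∫ u in Icc (s - δ) (s + δ), ‖v' u‖ := by
      intro a c ha hc hle
      rw [hAC a c hle]
      refine (intervalIntegral.norm_integral_le_integral_norm hle).trans ?_
      rw [intervalIntegral.integral_of_le hle]
      refine (setIntegral_mono_set (hni (s - δ) (s + δ))
        (Filter.Eventually.of_forall fun u => norm_nonneg _) ?_).trans_eq ?_
      · exact Filter.Eventually.of_forall fun u hu =>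
          ⟨ha.1.trans hu.1.le, hu.2.trans hc.2⟩
      · rfl
    rcases le_total t₂ t₁ with hle | hle
    · exact main t₂ t₁ h2 h1 hle
    · rw [norm_sub_rev]; exact main t₁ t₂ h1 h2 hle
  -- Cauchy-Schwarz
  have hCS : ∀ s : ℝ, (∫ u in Icc (s - δ) (s + δ), ‖v' u‖) ^ 2
      ≤ 2 * δ * ∫ u in Icc (s - δ) (s + δ), ‖v' u‖ ^ 2 := by
    intro s
    have hpq : Real.HolderConjugate 2 2 := ⟨by norm_num, by norm_num, by norm_num⟩
    have hf2 : MemLp (fun u => ‖v' u‖) (ENNReal.ofReal 2)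
        (volume.restrict (Icc (s - δ) (s + δ))) := by
      rw [show ENNReal.ofReal 2 = 2 by norm_num]
      rw [memLp_two_iff_integrable_sq hnm.restrict]
      exact hv'2.integrableOn
    have hg2 : MemLp (fun _ : ℝ => (1:ℝ)) (ENNReal.ofReal 2)
        (volume.restrict (Icc (s - δ) (s + δ))) := memLp_const 1
    have H := integral_mul_le_Lp_mul_Lq_of_nonneg hpq
      (Filter.Eventually.of_forall fun u => norm_nonneg (v' u))
      (Filter.Eventually.of_forall fun _ => zero_le_one) hf2 hg2
      (μ := volume.restrict (Icc (s - δ) (s + δ)))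
    simp only [mul_one, Real.one_rpow] at H
    have hconst : (∫ _u in Icc (s - δ) (s + δ), (1:ℝ)) = 2 * δ := by
      simp only [integral_const, measureReal_def, Measure.restrict_apply_univ, Real.volume_Icc, smul_eq_mul,
        mul_one]
      rw [ENNReal.toReal_ofReal (by linarith)]
      ring
    rw [hconst] at H
    set G := ∫ u in Icc (s - δ) (s + δ), ‖v' u‖ ^ 2 with hG
    have hGr : (∫ u in Icc (s - δ) (s + δ), ‖v' u‖ ^ (2:ℝ)) = G := by
      rw [hG]; congr 1; funext u; rw [Real.rpow_two]
    rw [hGr] at H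
    have hGnn : 0 ≤ G := integral_nonneg fun u => sq_nonneg _
    have hAnn : (0:ℝ) ≤ ∫ u in Icc (s - δ) (s + δ), ‖v' u‖ :=
      integral_nonneg fun u => norm_nonneg _
    calc (∫ u in Icc (s - δ) (s + δ), ‖v' u‖) ^ 2
        ≤ (G ^ (1/(2:ℝ)) * (2 * δ) ^ (1/(2:ℝ))) ^ 2 := by
          exact pow_le_pow_left₀ hAnn H 2
      _ = 2 * δ * G := by
          rw [mul_pow, ← Real.rpow_natCast (G ^ (1/(2:ℝ))) 2,
            ← Real.rpow_natCast ((2*δ) ^ (1/(2:ℝ))) 2,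
            ← Real.rpow_mul hGnn, ← Real.rpow_mul (by linarith)]
          norm_num
          ring
  have key : ∀ s : ℝ, W (∫ t, ρ (s - t) • v t) ≤ (∫ t, ρ (s - t) * W (v t))
      + |lam| * δ * (∫ u in Icc (s - δ) (s + δ), ‖v' u‖ ^ 2) := by
    intro s
    -- the translated mollifier
    have hρs : Continuous fun t => ρ (s - t) := hρc.comp (continuous_const.sub continuous_id)
    have hsupp : ∀ t, ρ (s - t) ≠ 0 → t ∈ Icc (s - δ) (s + δ) := by
      intro t ht
      have := hρsupp _ ht
      exact ⟨by linarith [this.2], by linarith [this.1]⟩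
    have hρscs : HasCompactSupport fun t => ρ (s - t) := by
      refine HasCompactSupport.intro (isCompact_Icc (a := s - δ) (b := s + δ)) ?_
      intro t ht
      by_contra h
      exact ht (hsupp t h)
    have hρsint : Integrable fun t => ρ (s - t) := hρs.integrable_of_hasCompactSupport hρscs
    have hρsone : (∫ t, ρ (s - t)) = 1 := by
      rw [integral_sub_left_eq_self ρ volume s, hρ1]
    -- the weighted measure
    set fs : ℝ → NNReal := fun t => (ρ (s - t)).toNNReal with hfs
    have hfsm : Measurable fs := hρs.measurable.real_toNNReal
    set μs : Measure ℝ := volume.withDensity fun t => (fs t : ENNReal) with hμs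
    have hcoe : ∀ t, (fs t : ℝ) = ρ (s - t) := fun t => Real.coe_toNNReal _ (hρ0 _)
    have hprob : IsProbabilityMeasure μs := by
      constructor
      rw [hμs, withDensity_apply _ MeasurableSet.univ, setLIntegral_univ]
      have : ∀ t, ((fs t : ENNReal)) = ENNReal.ofReal (ρ (s - t)) := fun t => rfl
      simp_rw [this]
      rw [← ofReal_integral_eq_lintegral_ofReal hρsint
        (Filter.Eventually.of_forall fun t => hρ0 _), hρsone, ENNReal.ofReal_one]
    -- integrability facts
    have smul_int : ∀ (F : ℝ → EuclideanSpace ℝ (Fin n)), Continuous F →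
        Integrable (fun t => ρ (s - t) • F t) volume := by
      intro F hF
      exact (hρs.smul hF).integrable_of_hasCompactSupport hρscs.smul_right
    have mul_int : ∀ (F : ℝ → ℝ), Continuous F →
        Integrable (fun t => ρ (s - t) * F t) volume := by
      intro F hF
      exact (hρs.mul hF).integrable_of_hasCompactSupport hρscs.mul_right
    -- transfer between μs and volume
    have hμs_int : ∀ (F : ℝ → EuclideanSpace ℝ (Fin n)), Continuous F → Integrable F μs := by
      intro F hF
      rw [hμs, integrable_withDensity_iff_integrable_smul hfsm]
      have : (fun t => fs t • F t) = fun t => ρ (s - t) • F t := by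
        funext t; rw [NNReal.smul_def, hcoe]
      rw [this]; exact smul_int F hF
    have hμs_eq : ∀ (F : ℝ → EuclideanSpace ℝ (Fin n)),
        (∫ t, F t ∂μs) = ∫ t, ρ (s - t) • F t := by
      intro F
      rw [hμs, integral_withDensity_eq_integral_smul hfsm]
      congr 1; funext t; rw [NNReal.smul_def, hcoe]
    have hμs_intR : ∀ (F : ℝ → ℝ), Continuous F → Integrable F μs := by
      intro F hF
      rw [hμs, integrable_withDensity_iff_integrable_smul hfsm]
      have : (fun t => fs t • F t) = fun t => ρ (s - t) * F t := by
        funext t; rw [NNReal.smul_def, hcoe, smul_eq_mul]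
      rw [this]; exact mul_int F hF
    have hμs_eqR : ∀ (F : ℝ → ℝ), (∫ t, F t ∂μs) = ∫ t, ρ (s - t) * F t := by
      intro F
      rw [hμs, integral_withDensity_eq_integral_smul hfsm]
      congr 1; funext t; rw [NNReal.smul_def, hcoe, smul_eq_mul]
    -- Jensen
    set g : EuclideanSpace ℝ (Fin n) → ℝ := fun x => W x - lam / 2 * ‖x‖ ^ 2 with hg
    have hgcont : Continuous g :=
      hW.continuous.sub (continuous_const.mul ((continuous_norm).pow 2))
    have hJ := hgconv.map_integral_le (μ := μs) hgcont.continuousOn isClosed_univ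
      (Filter.Eventually.of_forall fun t => mem_univ (v t)) (hμs_int v hvc)
      (hμs_intR (g ∘ v) (hgcont.comp hvc))
    rw [hμs_eq v] at hJ
    have : (∫ x, g (v x) ∂μs) = ∫ t, ρ (s - t) * g (v t) := hμs_eqR _
    rw [this] at hJ
    -- names
    set b : EuclideanSpace ℝ (Fin n) := ∫ t, ρ (s - t) • v t with hb
    set c : EuclideanSpace ℝ (Fin n) := v s with hc
    set A : ℝ := ∫ u in Icc (s - δ) (s + δ), ‖v' u‖ with hA
    set G : ℝ := ∫ u in Icc (s - δ) (s + δ), ‖v' u‖ ^ 2 with hG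
    set P : ℝ := ∫ t, ρ (s - t) * W (v t) with hP
    set Q : ℝ := ∫ t, ρ (s - t) * ‖v t‖ ^ 2 with hQ
    set R : ℝ := ∫ t, ρ (s - t) * ‖v t - c‖ ^ 2 with hR
    -- split Jensen RHS
    have hsplit : (∫ t, ρ (s - t) * g (v t)) = P - lam / 2 * Q := by
      have h1 : (fun t => ρ (s - t) * g (v t))
          = fun t => ρ (s - t) * W (v t) - lam / 2 * (ρ (s - t) * ‖v t‖ ^ 2) := by
        funext t; rw [hg]; ring
      have iW : Integrable (fun t => ρ (s - t) * W (v t)) volume :=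
        mul_int _ (hW.continuous.comp hvc)
      have iN : Integrable (fun t => ρ (s - t) * ‖v t‖ ^ 2) volume :=
        mul_int _ ((hvc.norm).pow 2)
      have iN2 : Integrable (fun t => lam / 2 * (ρ (s - t) * ‖v t‖ ^ 2)) volume :=
        iN.const_mul _
      rw [h1, integral_sub iW iN2, integral_const_mul]
    rw [hsplit] at hJ
    -- expansion of R
    have hinner : (∫ t, ρ (s - t) * (inner ℝ (v t) c : ℝ)) = inner ℝ b c := by
      have h1 : (fun t => ρ (s - t) * (inner ℝ (v t) c : ℝ))
          = fun t => (inner ℝ (ρ (s - t) • v t) c : ℝ) := by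
        funext t; rw [real_inner_smul_left]
      rw [h1]
      have h2 : (∫ t, (inner ℝ (ρ (s - t) • v t) c : ℝ))
          = ∫ t, (inner ℝ c (ρ (s - t) • v t) : ℝ) := by
        congr 1; funext t; rw [real_inner_comm]
      rw [h2, integral_inner (smul_int v hvc) c, real_inner_comm]
    have hRexp : R = Q - 2 * inner ℝ b c + ‖c‖ ^ 2 := by
      have h1 : (fun t => ρ (s - t) * ‖v t - c‖ ^ 2)
          = fun t => ρ (s - t) * ‖v t‖ ^ 2 - 2 * (ρ (s - t) * (inner ℝ (v t) c : ℝ))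
            + ρ (s - t) * ‖c‖ ^ 2 := by
        funext t
        rw [@norm_sub_sq_real]
        ring
      rw [hR, h1]
      have i1 : Integrable (fun t => ρ (s - t) * ‖v t‖ ^ 2) volume :=
        mul_int _ ((hvc.norm).pow 2)
      have i2 : Integrable (fun t => ρ (s - t) * (inner ℝ (v t) c : ℝ)) volume :=
        mul_int _ (continuous_inner.comp (hvc.prodMk continuous_const))
      have i3 : Integrable (fun t => ρ (s - t) * ‖c‖ ^ 2) volume := mul_int _ continuous_const
      have i2' : Integrable (fun t => 2 * (ρ (s - t) * (inner ℝ (v t) c : ℝ))) volume :=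
        i2.const_mul 2
      have i12 : Integrable
          (fun t => ρ (s - t) * ‖v t‖ ^ 2 - 2 * (ρ (s - t) * (inner ℝ (v t) c : ℝ))) volume :=
        i1.sub i2'
      rw [integral_add i12 i3, integral_sub i1 i2', integral_const_mul, hinner,
        integral_mul_const, hρsone]
      ring
    -- bound on R
    have hRbound : R ≤ 2 * δ * G := by
      have hpt : ∀ t, ρ (s - t) * ‖v t - c‖ ^ 2 ≤ ρ (s - t) * (2 * δ * G) := by
        intro t
        rcases eq_or_ne (ρ (s - t)) 0 with h | h
        · simp [h]
        · refine mul_le_mul_of_nonneg_left ?_ (hρ0 _)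
          have ht := hsupp t h
          have hs : s ∈ Icc (s - δ) (s + δ) := ⟨by linarith, by linarith⟩
          have h5 := hosc s t s ht hs
          calc ‖v t - c‖ ^ 2 ≤ A ^ 2 := by
                refine pow_le_pow_left₀ (norm_nonneg _) ?_ 2
                exact h5
            _ ≤ 2 * δ * G := hCS s
      calc R ≤ ∫ t, ρ (s - t) * (2 * δ * G) :=
            integral_mono (mul_int _ (((hvc.sub continuous_const).norm).pow 2))
              (hρsint.mul_const _) hpt
        _ = 2 * δ * G := by rw [integral_mul_const, hρsone, one_mul]
    -- final arithmetic
    have hQB : Q - ‖b‖ ^ 2 ≤ 2 * δ * G := by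
      have h6 : ‖b - c‖ ^ 2 = ‖b‖ ^ 2 - 2 * inner ℝ b c + ‖c‖ ^ 2 := @norm_sub_sq_real _ _ _ _ _
      nlinarith [sq_nonneg ‖b - c‖]
    have habs : |lam| = -lam := abs_of_nonpos hlam
    have hGnn : (0:ℝ) ≤ G := integral_nonneg fun u => sq_nonneg _
    have hWb : W b - lam / 2 * ‖b‖ ^ 2 ≤ P - lam / 2 * Q := hJ
    rw [habs]
    nlinarith [mul_le_mul_of_nonneg_left hQB (by linarith : (0:ℝ) ≤ -lam / 2)]

  have hρcs : HasCompactSupport ρ := by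
    refine HasCompactSupport.intro (isCompact_Icc (a := -δ) (b := δ)) ?_
    intro t ht; by_contra h; exact ht (hρsupp t h)
  have hρint : Integrable ρ := hρc.integrable_of_hasCompactSupport hρcs
  set L : ℝ →L[ℝ] ℝ →L[ℝ] ℝ := ContinuousLinearMap.lsmul ℝ ℝ with hL
  -- first convolution term
  have hT1conv : (fun s => ∫ t, ρ (s - t) * W (v t))
      = ρ ⋆[L, volume] (fun t => W (v t)) := by
    funext s
    show (∫ t, ρ (s - t) * W (v t)) = _
    have h1 : (fun t => ρ (s - t) * W (v t))
        = fun t => (fun u => ρ u * W (v (s - u))) (s - t) := by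
      funext t; simp [sub_sub_cancel]
    rw [h1, integral_sub_left_eq_self (fun u => ρ u * W (v (s - u))) volume s]
    simp [convolution, hL, ContinuousLinearMap.lsmul_apply, smul_eq_mul]
  have hT1int : Integrable (fun s => ∫ t, ρ (s - t) * W (v t)) volume := by
    rw [hT1conv]; exact hρint.integrable_convolution L hint1
  have hT1val : (∫ s, ∫ t, ρ (s - t) * W (v t)) = ∫ t, W (v t) := by
    rw [show (∫ s, ∫ t, ρ (s - t) * W (v t))
        = ∫ s, (fun s => ∫ t, ρ (s - t) * W (v t)) s from rfl]
    rw [hT1conv, integral_convolution L hρint hint1, hρ1]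
    simp [hL]
  -- second convolution term
  set ind : ℝ → ℝ := (Icc (-δ) δ).indicator (fun _ => (1:ℝ)) with hind
  have hindint : Integrable ind volume := by
    refine IntegrableOn.integrable_indicator ?_ measurableSet_Icc
    refine integrableOn_const ?_
    simp only [Real.volume_Icc]; exact ENNReal.ofReal_ne_top
  have hindval : (∫ t, ind t) = 2 * δ := by
    rw [hind, integral_indicator measurableSet_Icc]
    simp only [integral_const, measureReal_def, Measure.restrict_apply_univ, Real.volume_Icc, smul_eq_mul,
      mul_one]
    rw [ENNReal.toReal_ofReal (by linarith)]
    ring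
  have hDconv : (fun s => ∫ t, ind (s - t) * ‖v' t‖ ^ 2)
      = ind ⋆[L, volume] (fun t => ‖v' t‖ ^ 2) := by
    funext s
    show (∫ t, ind (s - t) * ‖v' t‖ ^ 2) = _
    have h1 : (fun t => ind (s - t) * ‖v' t‖ ^ 2)
        = fun t => (fun u => ind u * ‖v' (s - u)‖ ^ 2) (s - t) := by
      funext t; simp [sub_sub_cancel]
    rw [h1, integral_sub_left_eq_self (fun u => ind u * ‖v' (s - u)‖ ^ 2) volume s]
    simp [convolution, hL, ContinuousLinearMap.lsmul_apply, smul_eq_mul]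
  have hDint : Integrable (fun s => ∫ t, ind (s - t) * ‖v' t‖ ^ 2) volume := by
    rw [hDconv]; exact hindint.integrable_convolution L hv'2
  have hDval : (∫ s, ∫ t, ind (s - t) * ‖v' t‖ ^ 2) = 2 * δ * ∫ t, ‖v' t‖ ^ 2 := by
    rw [show (∫ s, ∫ t, ind (s - t) * ‖v' t‖ ^ 2)
        = ∫ s, (fun s => ∫ t, ind (s - t) * ‖v' t‖ ^ 2) s from rfl]
    rw [hDconv, integral_convolution L hindint hv'2, hindval]
    simp [hL]
  have hDpt : ∀ s, (∫ t, ind (s - t) * ‖v' t‖ ^ 2)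
      = ∫ u in Icc (s - δ) (s + δ), ‖v' u‖ ^ 2 := by
    intro s
    have h1 : (fun t => ind (s - t) * ‖v' t‖ ^ 2)
        = (Icc (s - δ) (s + δ)).indicator fun t => ‖v' t‖ ^ 2 := by
      funext t
      by_cases ht : t ∈ Icc (s - δ) (s + δ)
      · have hmem : s - t ∈ Icc (-δ) δ := ⟨by linarith [ht.2], by linarith [ht.1]⟩
        rw [hind, Set.indicator_of_mem hmem, Set.indicator_of_mem ht, one_mul]
      · have hmem : s - t ∉ Icc (-δ) δ := by
          intro hmem
          exact ht ⟨by linarith [hmem.2], by linarith [hmem.1]⟩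
        rw [hind, Set.indicator_of_notMem hmem, Set.indicator_of_notMem ht, zero_mul]
    rw [show (∫ t, ind (s - t) * ‖v' t‖ ^ 2)
        = ∫ t, ((Icc (s - δ) (s + δ)).indicator fun t => ‖v' t‖ ^ 2) t by rw [← h1]]
    rw [integral_indicator measurableSet_Icc]
  -- combine
  have hmono : (∫ s, W (∫ t, ρ (s - t) • v t))
      ≤ ∫ s, ((∫ t, ρ (s - t) * W (v t)) + |lam| * δ * ∫ t, ind (s - t) * ‖v' t‖ ^ 2) := by
    refine integral_mono hint2 (hT1int.add (hDint.const_mul _)) ?_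
    intro s
    have h2 := key s
    rw [← hDpt s] at h2
    exact h2
  have hsum : (∫ s, ((∫ t, ρ (s - t) * W (v t)) + |lam| * δ * ∫ t, ind (s - t) * ‖v' t‖ ^ 2))
      = (∫ t, W (v t)) + |lam| * δ * (2 * δ * ∫ t, ‖v' t‖ ^ 2) := by
    rw [integral_add hT1int (hDint.const_mul _), integral_const_mul, hT1val, hDval]
  have hv'nn : (0:ℝ) ≤ ∫ t, ‖v' t‖ ^ 2 := integral_nonneg fun t => sq_nonneg _
  have habs : (0:ℝ) ≤ |lam| := abs_nonneg _
  calc (∫ s, W (∫ t, ρ (s - t) • v t))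
      ≤ ∫ s, ((∫ t, ρ (s - t) * W (v t)) + |lam| * δ * ∫ t, ind (s - t) * ‖v' t‖ ^ 2) := hmono
    _ = (∫ t, W (v t)) + |lam| * δ * (2 * δ * ∫ t, ‖v' t‖ ^ 2) := hsum
    _ ≤ (∫ t, W (v t)) + 4 * δ ^ 2 * |lam| * ∫ t, ‖v' t‖ ^ 2 := by
        have h9 : (0:ℝ) ≤ |lam| * δ ^ 2 * ∫ t, ‖v' t‖ ^ 2 := by positivity
        nlinarith [h9]
end
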